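/- arXiv:1512.08156 — 11 statements merged into one kernel-verified Lean document; each statement's English description precedes it below -/
import Mathlib

section
/- Let O be a real 2n×2n matrix with OᵀJO = J, written in n×n block form O = [[O₁, O₂],[O₃, O₄]]. (i) If O₁ is invertible, then there exist skew-symmetric n×n matrices B and Π such that O = [[1,0],[B,1]] · [[O₁, 0],[0, O₁⁻ᵀ]] · [[1,Π],[0,1]], and such B and Π are unique. (ii) If O₄ is invertible, then there exist skew-symmetric n×n matrices B' and Π' such that O = [[1,Π'],[0,1]] · [[O₄⁻ᵀ, 0],[0, O₄]] · [[1,0],[B',1]], and such B' and Π' are unique. -/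
open Matrix

/-- The canonical pairing matrix `J = [[0,1],[1,0]]` of signature `(n,n)`. -/
def Jmat (n : ℕ) : Matrix (Fin n ⊕ Fin n) (Fin n ⊕ Fin n) ℝ :=
  Matrix.fromBlocks 0 1 1 0

lemma skew_aux {n : ℕ} (A X : Matrix (Fin n) (Fin n) ℝ) (hA : IsUnit A.det)
    (h : Xᵀ * A + Aᵀ * X = 0) : (X * A⁻¹)ᵀ = -(X * A⁻¹) := by
  have hc : Xᵀ * A = -(Aᵀ * X) := eq_neg_of_add_eq_zero_left h
  have h1 : A * A⁻¹ = 1 := Matrix.mul_nonsing_inv A hA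
  have hT2 : (Aᵀ)⁻¹ * Aᵀ = 1 := Matrix.nonsing_inv_mul Aᵀ (by simpa using hA)
  have hXT : Xᵀ = -(Aᵀ * X * A⁻¹) := by
    calc Xᵀ = Xᵀ * A * A⁻¹ := by rw [Matrix.mul_assoc, h1, Matrix.mul_one]
    _ = -(Aᵀ * X) * A⁻¹ := by rw [hc]
    _ = -(Aᵀ * X * A⁻¹) := by rw [Matrix.neg_mul]
  rw [Matrix.transpose_mul, Matrix.transpose_nonsing_inv, hXT]
  rw [Matrix.mul_neg]
  congr 1
  calc (Aᵀ)⁻¹ * (Aᵀ * X * A⁻¹) = ((Aᵀ)⁻¹ * Aᵀ) * X * A⁻¹ := by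
        simp only [Matrix.mul_assoc]
  _ = X * A⁻¹ := by rw [hT2, Matrix.one_mul]

lemma skew_aux2 {n : ℕ} (A X : Matrix (Fin n) (Fin n) ℝ) (hA : IsUnit A.det)
    (h : X * Aᵀ + A * Xᵀ = 0) : (A⁻¹ * X)ᵀ = -(A⁻¹ * X) := by
  have h2 := skew_aux Aᵀ Xᵀ (by simpa using hA) (by simpa using h)
  have e : Xᵀ * (Aᵀ)⁻¹ = (A⁻¹ * X)ᵀ := by
    rw [Matrix.transpose_mul, Matrix.transpose_nonsing_inv]
  rw [e, Matrix.transpose_transpose] at h2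
  exact (neg_eq_iff_eq_neg.mpr h2).symm

/-- Decompositions of an `O(n,n)` matrix with invertible top-left
(resp. bottom-right) block into a `B`-transform, a block diagonal `GL(n)`
factor, and a `Π`-transform (resp. the dual order), with unique
skew-symmetric `B` and `Π`. -/
theorem stmt_4 (n : ℕ) (O₁ O₂ O₃ O₄ : Matrix (Fin n) (Fin n) ℝ)
    (hO : (fromBlocks O₁ O₂ O₃ O₄)ᵀ * Jmat n * fromBlocks O₁ O₂ O₃ O₄ = Jmat n) :
    (IsUnit O₁ →
      ∃! BP : Matrix (Fin n) (Fin n) ℝ × Matrix (Fin n) (Fin n) ℝ,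
        BP.1ᵀ = -BP.1 ∧ BP.2ᵀ = -BP.2 ∧
        fromBlocks O₁ O₂ O₃ O₄ =
          fromBlocks 1 0 BP.1 1 * fromBlocks O₁ 0 0 (O₁ᵀ)⁻¹ *
            fromBlocks 1 BP.2 0 1) ∧
    (IsUnit O₄ →
      ∃! PB : Matrix (Fin n) (Fin n) ℝ × Matrix (Fin n) (Fin n) ℝ,
        PB.1ᵀ = -PB.1 ∧ PB.2ᵀ = -PB.2 ∧
        fromBlocks O₁ O₂ O₃ O₄ =
          fromBlocks 1 PB.1 0 1 * fromBlocks (O₄ᵀ)⁻¹ 0 0 O₄ *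
            fromBlocks 1 0 PB.2 1) := by
  have hJJ : Jmat n * Jmat n = 1 := by
    simp [Jmat, Matrix.fromBlocks_multiply, Matrix.fromBlocks_one]
  set M := fromBlocks O₁ O₂ O₃ O₄ with hM
  -- derive M * J * Mᵀ = J
  have h1 : Jmat n * Mᵀ * Jmat n * M = 1 := by
    rw [Matrix.mul_assoc (Jmat n) Mᵀ (Jmat n), Matrix.mul_assoc, hO, hJJ]
  have h2 : M * (Jmat n * Mᵀ * Jmat n) = 1 := mul_eq_one_comm.mp h1
  have hO' : M * Jmat n * Mᵀ = Jmat n := by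
    have h3 : M * (Jmat n * Mᵀ * Jmat n) * Jmat n = Jmat n := by
      rw [h2, Matrix.one_mul]
    calc M * Jmat n * Mᵀ = M * (Jmat n * Mᵀ * Jmat n) * Jmat n := by
          simp only [Matrix.mul_assoc, hJJ, Matrix.mul_one]
    _ = Jmat n := h3
  -- extract block equations
  have hblocks : O₃ᵀ * O₁ + O₁ᵀ * O₃ = 0 ∧ O₃ᵀ * O₂ + O₁ᵀ * O₄ = 1 ∧
      O₄ᵀ * O₁ + O₂ᵀ * O₃ = 1 ∧ O₄ᵀ * O₂ + O₂ᵀ * O₄ = 0 := by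
    have h := hO
    rw [hM] at h
    simp only [Jmat, Matrix.fromBlocks_transpose, Matrix.fromBlocks_multiply,
      Matrix.mul_zero, Matrix.zero_mul, Matrix.mul_one, Matrix.one_mul,
      add_zero, zero_add] at h
    have := Matrix.fromBlocks_inj.mp h
    exact ⟨this.1, this.2.1, this.2.2.1, this.2.2.2⟩
  obtain ⟨e2, e1, e4, e5⟩ := hblocks
  have hblocks' : O₂ * O₁ᵀ + O₁ * O₂ᵀ = 0 ∧ O₄ * O₃ᵀ + O₃ * O₄ᵀ = 0 := by
    have h := hO'
    rw [hM] at h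
    simp only [Jmat, Matrix.fromBlocks_transpose, Matrix.fromBlocks_multiply,
      Matrix.mul_zero, Matrix.zero_mul, Matrix.mul_one, Matrix.one_mul,
      add_zero, zero_add] at h
    have := Matrix.fromBlocks_inj.mp h
    exact ⟨this.1, this.2.2.2⟩
  obtain ⟨e3, e6⟩ := hblocks'
  constructor
  · -- part (i)
    intro hU
    have hd : IsUnit O₁.det := (Matrix.isUnit_iff_isUnit_det O₁).mp hU
    have hdT : IsUnit O₁ᵀ.det := by simpa using hd
    have hi1 : O₁ * O₁⁻¹ = 1 := Matrix.mul_nonsing_inv O₁ hd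
    have hi2 : O₁⁻¹ * O₁ = 1 := Matrix.nonsing_inv_mul O₁ hd
    have hiT : (O₁ᵀ)⁻¹ * O₁ᵀ = 1 := Matrix.nonsing_inv_mul O₁ᵀ hdT
    have skewB : (O₃ * O₁⁻¹)ᵀ = -(O₃ * O₁⁻¹) := skew_aux O₁ O₃ hd e2
    have skewP : (O₁⁻¹ * O₂)ᵀ = -(O₁⁻¹ * O₂) := skew_aux2 O₁ O₂ hd e3
    -- key identity for the bottom-right block
    have key : O₃ * O₁⁻¹ * O₂ + (O₁ᵀ)⁻¹ = O₄ := by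
      have hBT : (O₁ᵀ)⁻¹ * O₃ᵀ = -(O₃ * O₁⁻¹) := by
        have := skewB
        rwa [Matrix.transpose_mul, Matrix.transpose_nonsing_inv] at this
      have h5 : (O₁ᵀ)⁻¹ * (O₃ᵀ * O₂ + O₁ᵀ * O₄) = (O₁ᵀ)⁻¹ := by
        rw [e1, Matrix.mul_one]
      rw [Matrix.mul_add, ← Matrix.mul_assoc, ← Matrix.mul_assoc, hBT, hiT,
        Matrix.one_mul, Matrix.neg_mul] at h5
      have := congrArg (fun X => X + O₃ * O₁⁻¹ * O₂) h5
      simpa [add_comm, add_assoc, add_left_comm] using this.symm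
    refine ⟨(O₃ * O₁⁻¹, O₁⁻¹ * O₂), ⟨skewB, skewP, ?_⟩, ?_⟩
    · rw [hM]
      simp only [Matrix.fromBlocks_multiply, Matrix.mul_zero, Matrix.zero_mul,
        Matrix.mul_one, Matrix.one_mul, add_zero, zero_add]
      rw [Matrix.fromBlocks_inj]
      refine ⟨rfl, ?_, ?_, ?_⟩
      · rw [← Matrix.mul_assoc, hi1, Matrix.one_mul]
      · rw [Matrix.mul_assoc, hi2, Matrix.mul_one]
      · rw [← key]
        congr 1
        rw [Matrix.mul_assoc (O₃ * O₁⁻¹) O₁ (O₁⁻¹ * O₂),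
          ← Matrix.mul_assoc O₁ O₁⁻¹ O₂, hi1, Matrix.one_mul]
    · rintro ⟨B, P⟩ ⟨-, -, heq⟩
      rw [hM] at heq
      simp only [Matrix.fromBlocks_multiply, Matrix.mul_zero, Matrix.zero_mul,
        Matrix.mul_one, Matrix.one_mul, add_zero, zero_add] at heq
      obtain ⟨-, hP, hB, -⟩ := Matrix.fromBlocks_inj.mp heq
      have hB' : B = O₃ * O₁⁻¹ := by
        rw [hB, Matrix.mul_assoc, hi1, Matrix.mul_one]
      have hP' : P = O₁⁻¹ * O₂ := by
        rw [hP, ← Matrix.mul_assoc, hi2, Matrix.one_mul]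
      exact Prod.ext hB' hP'
  · -- part (ii)
    intro hU
    have hd : IsUnit O₄.det := (Matrix.isUnit_iff_isUnit_det O₄).mp hU
    have hdT : IsUnit O₄ᵀ.det := by simpa using hd
    have hi1 : O₄ * O₄⁻¹ = 1 := Matrix.mul_nonsing_inv O₄ hd
    have hi2 : O₄⁻¹ * O₄ = 1 := Matrix.nonsing_inv_mul O₄ hd
    have hiT : (O₄ᵀ)⁻¹ * O₄ᵀ = 1 := Matrix.nonsing_inv_mul O₄ᵀ hdT
    have skewP : (O₂ * O₄⁻¹)ᵀ = -(O₂ * O₄⁻¹) := by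
      refine skew_aux O₄ O₂ hd ?_
      rw [add_comm]; exact e5
    have skewB : (O₄⁻¹ * O₃)ᵀ = -(O₄⁻¹ * O₃) := by
      refine skew_aux2 O₄ O₃ hd ?_
      rw [add_comm]; exact e6
    have key : (O₄ᵀ)⁻¹ + O₂ * O₄⁻¹ * O₃ = O₁ := by
      have hPT : (O₄ᵀ)⁻¹ * O₂ᵀ = -(O₂ * O₄⁻¹) := by
        have := skewP
        rwa [Matrix.transpose_mul, Matrix.transpose_nonsing_inv] at this
      have h5 : (O₄ᵀ)⁻¹ * (O₄ᵀ * O₁ + O₂ᵀ * O₃) = (O₄ᵀ)⁻¹ := by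
        rw [e4, Matrix.mul_one]
      rw [Matrix.mul_add, ← Matrix.mul_assoc, ← Matrix.mul_assoc, hPT, hiT,
        Matrix.one_mul, Matrix.neg_mul] at h5
      have := congrArg (fun X => X + O₂ * O₄⁻¹ * O₃) h5
      simpa [add_comm, add_assoc, add_left_comm] using this.symm
    refine ⟨(O₂ * O₄⁻¹, O₄⁻¹ * O₃), ⟨skewP, skewB, ?_⟩, ?_⟩
    · rw [hM]
      simp only [Matrix.fromBlocks_multiply, Matrix.mul_zero, Matrix.zero_mul,
        Matrix.mul_one, Matrix.one_mul, add_zero, zero_add]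
      rw [Matrix.fromBlocks_inj]
      refine ⟨?_, ?_, ?_, rfl⟩
      · rw [← key]
        congr 1
        rw [Matrix.mul_assoc (O₂ * O₄⁻¹) O₄ (O₄⁻¹ * O₃),
          ← Matrix.mul_assoc O₄ O₄⁻¹ O₃, hi1, Matrix.one_mul]
      · rw [Matrix.mul_assoc, hi2, Matrix.mul_one]
      · rw [← Matrix.mul_assoc, hi1, Matrix.one_mul]
    · rintro ⟨P, B⟩ ⟨-, -, heq⟩
      rw [hM] at heq
      simp only [Matrix.fromBlocks_multiply, Matrix.mul_zero, Matrix.zero_mul,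
        Matrix.mul_one, Matrix.one_mul, add_zero, zero_add] at heq
      obtain ⟨-, hP, hB, -⟩ := Matrix.fromBlocks_inj.mp heq
      have hP' : P = O₂ * O₄⁻¹ := by
        rw [hP, Matrix.mul_assoc, hi1, Matrix.mul_one]
      have hB' : B = O₄⁻¹ * O₃ := by
        rw [hB, ← Matrix.mul_assoc, hi2, Matrix.one_mul]
      exact Prod.ext hP' hB'
end

section
/- Let V be an n-dimensional real vector space, let W = V × V* and equip W with the canonical symmetric pairing ⟨(v,α),(v',α')⟩ := α(v') + α'(v). Then for every n-dimensional subspace V₊ ⊆ W on which this pairing restricts to a positive definite form, there exists a unique pair (g, B), where g is a symmetric positive definite bilinear form on V and B is an alternating (skew-symmetric) bilinear form on V, such that V₊ = { (v, g(v,·) + B(v,·)) : v ∈ V }. Conversely, for any such pair (g, B), the set { (v, g(v,·) + B(v,·)) : v ∈ V } is an n-dimensional subspace of W on which the pairing restricts to a positive definite form. -/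
open Module

/-- **Generalized metrics as pairs `(g,B)`.** On `W = V × V*` with the
canonical pairing `⟨(v,α),(v',α')⟩ = α(v') + α'(v)`, every `n`-dimensional
positive definite subspace `V₊` is the graph of `g + B` for a unique pair of a
symmetric positive definite bilinear form `g` and an alternating bilinear form
`B` on `V`; conversely every such graph is an `n`-dimensional positive
definite subspace. -/
theorem stmt_6 {V : Type*} [AddCommGroup V] [Module ℝ V] [FiniteDimensional ℝ V]
    (n : ℕ) (hn : Module.finrank ℝ V = n) :
    (∀ Vp : Submodule ℝ (V × Module.Dual ℝ V),
      Module.finrank ℝ Vp = n →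
      (∀ w : V × Module.Dual ℝ V, w ∈ Vp → w ≠ 0 → 0 < w.2 w.1 + w.2 w.1) →
      ∃! gB : (V →ₗ[ℝ] Module.Dual ℝ V) × (V →ₗ[ℝ] Module.Dual ℝ V),
        (∀ v w : V, gB.1 v w = gB.1 w v) ∧ (∀ v : V, v ≠ 0 → 0 < gB.1 v v) ∧
        (∀ v w : V, gB.2 v w = -gB.2 w v) ∧
        Vp = LinearMap.graph (gB.1 + gB.2)) ∧
    (∀ g B : V →ₗ[ℝ] Module.Dual ℝ V,
      (∀ v w : V, g v w = g w v) → (∀ v : V, v ≠ 0 → 0 < g v v) →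
      (∀ v w : V, B v w = -B w v) →
      Module.finrank ℝ (LinearMap.graph (g + B)) = n ∧
      ∀ w : V × Module.Dual ℝ V, w ∈ LinearMap.graph (g + B) → w ≠ 0 →
        0 < w.2 w.1 + w.2 w.1) := by
  constructor
  · intro Vp hVp hpos
    -- the projection to the first factor, restricted to Vp
    set p : Vp →ₗ[ℝ] V := (LinearMap.fst ℝ V (Module.Dual ℝ V)).comp Vp.subtype with hp
    have hinj : Function.Injective p := by
      have hker : LinearMap.ker p = ⊥ := by
        rw [Submodule.eq_bot_iff]
        rintro ⟨x, hx⟩ hk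
        have h1 : x.1 = 0 := hk
        have : x = 0 := by
          by_contra hne
          have := hpos x hx hne
          rw [h1] at this
          simp at this
        simpa using this
      exact (LinearMap.ker_eq_bot (M := ↥Vp) (M₂ := V) (f := p)).mp hker
    have hbij : Function.Bijective p := by
      refine ⟨hinj, ?_⟩
      have : Module.finrank ℝ Vp = Module.finrank ℝ V := by rw [hVp, hn]
      exact (LinearMap.injective_iff_surjective_of_finrank_eq_finrank (K := ℝ) (V := ↥Vp) (V₂ := V) this (f := p)).mp hinj
    let e : Vp ≃ₗ[ℝ] V := LinearEquiv.ofBijective p hbij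
    let F : V →ₗ[ℝ] Module.Dual ℝ V :=
      ((LinearMap.snd ℝ V (Module.Dual ℝ V)).comp Vp.subtype).comp (e.symm : V →ₗ[ℝ] Vp)
    have hF : ∀ v : V, ((v, F v) : V × Module.Dual ℝ V) = ((e.symm v : Vp) : V × Module.Dual ℝ V) := by
      intro v
      have h1 : ((e.symm v : Vp) : V × Module.Dual ℝ V).1 = v := e.apply_symm_apply v
      exact Prod.ext h1.symm rfl
    have hgraph : Vp = LinearMap.graph F := by
      ext x
      rw [LinearMap.mem_graph_iff]
      constructor
      · intro hx
        have : e.symm x.1 = ⟨x, hx⟩ := by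
          apply e.injective
          simp [e, LinearEquiv.ofBijective_apply, p]
        show x.2 = F x.1
        simp only [F, LinearMap.comp_apply, LinearEquiv.coe_coe, this]
        rfl
      · intro hx
        have : x = ((e.symm x.1 : Vp) : V × Module.Dual ℝ V) := by
          rw [← hF x.1, ← hx]
        rw [this]
        exact (e.symm x.1).2
    have hFpos : ∀ v : V, v ≠ 0 → 0 < F v v := by
      intro v hv
      have hmem : ((v, F v) : V × Module.Dual ℝ V) ∈ Vp := by
        rw [hgraph]; exact LinearMap.mem_graph_iff _ _ |>.mpr rfl
      have hne : ((v, F v) : V × Module.Dual ℝ V) ≠ 0 := by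
        intro h
        exact hv (congrArg Prod.fst h)
      have := hpos _ hmem hne
      linarith [this]
    -- decompose F
    refine ⟨⟨(2⁻¹ : ℝ) • (F + F.flip), (2⁻¹ : ℝ) • (F - F.flip)⟩, ⟨?_, ?_, ?_, ?_⟩, ?_⟩
    · intro v w; simp [LinearMap.flip_apply]; ring
    · intro v hv
      have := hFpos v hv
      simp only [LinearMap.smul_apply, LinearMap.add_apply, LinearMap.flip_apply,
        smul_eq_mul]
      linarith
    · intro v w; simp [LinearMap.flip_apply]; ring
    · have : (2⁻¹ : ℝ) • (F + F.flip) + (2⁻¹ : ℝ) • (F - F.flip) = F := by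
        ext v w
        simp [LinearMap.flip_apply]
        ring
      rw [this]; exact hgraph
    · rintro ⟨g, B⟩ ⟨hsym, hposg, hskew, hgr⟩
      have hFe : g + B = F := by
        apply LinearMap.ext; intro v
        have h1 : ((v, (g + B) v) : V × Module.Dual ℝ V) ∈ LinearMap.graph (g + B) :=
          LinearMap.mem_graph_iff _ _ |>.mpr rfl
        rw [← hgr, hgraph, LinearMap.mem_graph_iff] at h1
        exact h1
      have hg : g = (2⁻¹ : ℝ) • (F + F.flip) := by
        ext v w
        have hvw : g v w + B v w = F v w := by
          have := LinearMap.ext_iff.mp hFe v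
          have := LinearMap.ext_iff.mp this w
          simpa using this
        have hwv : g w v + B w v = F w v := by
          have := LinearMap.ext_iff.mp hFe w
          have := LinearMap.ext_iff.mp this v
          simpa using this
        have hs := hsym v w
        have hk := hskew v w
        simp only [LinearMap.smul_apply, LinearMap.add_apply, LinearMap.flip_apply, smul_eq_mul]
        linarith
      have hB : B = (2⁻¹ : ℝ) • (F - F.flip) := by
        have : B = F - g := by rw [← hFe]; abel
        rw [this, hg]
        ext v w
        simp [LinearMap.flip_apply]
        ring
      exact Prod.ext hg hB
  · intro g B hsym hposg hskew
    constructor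
    · rw [LinearMap.graph_eq_range_prod]
      rw [LinearMap.finrank_range_of_inj, hn]
      intro x y hxy
      exact congrArg Prod.fst hxy
    · intro w hw hne
      rw [LinearMap.mem_graph_iff] at hw
      have hv : w.1 ≠ 0 := by
        intro h
        apply hne
        have : w.2 = 0 := by rw [hw, h]; simp
        exact Prod.ext h this
      have hBvv : B w.1 w.1 = 0 := by
        have := hskew w.1 w.1; linarith
      have : w.2 w.1 = g w.1 w.1 := by
        rw [hw]; simp [hBvv]
      rw [this]
      have := hposg w.1 hv
      linarith
end

section
/- Let η be a real symmetric invertible m×m matrix. (i) If τ is a real m×m matrix satisfying ητ = τᵀη (symmetry with respect to η) and τᵀητ = η (orthogonality with respect to η), then τ·τ = 1 and the matrix G := ητ is symmetric and satisfies Gη⁻¹G = η; moreover G is positive definite if and only if (v,w) ↦ vᵀητw is positive definite. (ii) Conversely, if G is a real symmetric positive definite m×m matrix with Gη⁻¹G = η, then τ := η⁻¹G satisfies ητ = τᵀη, τᵀητ = η, and τ·τ = 1. -/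
open Matrix

/-- Equivalence of the two descriptions of a generalized metric with respect
to an invertible symmetric matrix `η`: (i) an `η`-symmetric `η`-orthogonal
matrix `τ` is an involution and `G := ητ` is symmetric with `Gη⁻¹G = η`,
`G` being positive definite iff its quadratic form is; (ii) conversely, if `G`
is symmetric positive definite with `Gη⁻¹G = η` then `τ := η⁻¹G` is
`η`-symmetric, `η`-orthogonal and an involution. -/
theorem stmt_7 {m : ℕ} (η : Matrix (Fin m) (Fin m) ℝ) (hη : ηᵀ = η) (hu : IsUnit η) :
    (∀ τ : Matrix (Fin m) (Fin m) ℝ, η * τ = τᵀ * η → τᵀ * η * τ = η →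
      τ * τ = 1 ∧ (η * τ)ᵀ = η * τ ∧ (η * τ) * η⁻¹ * (η * τ) = η ∧
      ((η * τ).PosDef ↔ ∀ v : Fin m → ℝ, v ≠ 0 → 0 < v ⬝ᵥ (η * τ) *ᵥ v)) ∧
    (∀ G : Matrix (Fin m) (Fin m) ℝ, G.PosDef → G * η⁻¹ * G = η →
      η * (η⁻¹ * G) = (η⁻¹ * G)ᵀ * η ∧
      (η⁻¹ * G)ᵀ * η * (η⁻¹ * G) = η ∧
      (η⁻¹ * G) * (η⁻¹ * G) = 1) := by
  have hdet : IsUnit η.det := (Matrix.isUnit_iff_isUnit_det η).mp hu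
  have hinv : η * η⁻¹ = 1 := Matrix.mul_nonsing_inv η hdet
  have hinv' : η⁻¹ * η = 1 := Matrix.nonsing_inv_mul η hdet
  have hηit : η⁻¹ᵀ = η⁻¹ := by rw [Matrix.transpose_nonsing_inv, hη]
  constructor
  · intro τ hsym horth
    have hττ : τ * τ = 1 := by
      have h1 : η * (τ * τ) = η := by
        calc η * (τ * τ) = (η * τ) * τ := by rw [Matrix.mul_assoc]
        _ = τᵀ * η * τ := by rw [hsym]
        _ = η := horth
      have := congrArg (fun M => η⁻¹ * M) h1
      simpa [← Matrix.mul_assoc, hinv'] using this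
    have hGsym : (η * τ)ᵀ = η * τ := by
      rw [Matrix.transpose_mul, hη, ← hsym]
    refine ⟨hττ, hGsym, ?_, ?_⟩
    · calc (η * τ) * η⁻¹ * (η * τ) = τᵀ * η * η⁻¹ * (η * τ) := by rw [hsym]
      _ = τᵀ * (η * τ) := by rw [Matrix.mul_assoc τᵀ η η⁻¹, hinv, Matrix.mul_one]
      _ = τᵀ * η * τ := by rw [Matrix.mul_assoc]
      _ = η := horth
    · constructor
      · intro hpd v hv
        have := hpd.dotProduct_mulVec_pos hv
        simpa using this
      · intro h
        refine Matrix.PosDef.of_dotProduct_mulVec_pos ?_ ?_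
        · simpa [Matrix.IsHermitian] using hGsym
        · intro v hv
          simpa using h v hv
  · intro G hG hGG
    have hGt : Gᵀ = G := hG.1
    have hηG : η * (η⁻¹ * G) = G := by rw [← Matrix.mul_assoc, hinv, Matrix.one_mul]
    have htη : (η⁻¹ * G)ᵀ * η = G := by
      rw [Matrix.transpose_mul, hGt, hηit, Matrix.mul_assoc, hinv', Matrix.mul_one]
    refine ⟨by rw [hηG, htη], ?_, ?_⟩
    · rw [htη, ← Matrix.mul_assoc, hGG]
    · have : (η⁻¹ * G) * (η⁻¹ * G) = η⁻¹ * (G * η⁻¹ * G) := by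
        simp only [Matrix.mul_assoc]
      rw [this, hGG, hinv']
end

section
/- Let g be a real symmetric positive definite n×n matrix and B a real skew-symmetric n×n matrix. Then g + B is invertible, the matrix G := g − Bg⁻¹B is symmetric positive definite, the matrix Π := −g⁻¹B(g − Bg⁻¹B)⁻¹ is skew-symmetric, and (g + B)⁻¹ = G⁻¹ + Π. In other words, G⁻¹ is the symmetric part and Π the skew-symmetric part of (g+B)⁻¹, with G = g − Bg⁻¹B and Π = −g⁻¹B(g − Bg⁻¹B)⁻¹. -/
open Matrix

/-- **Dual fields.** For `g` symmetric positive definite and `B`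
skew-symmetric, `g + B` is invertible, `G := g − Bg⁻¹B` is symmetric positive
definite, `Π := −g⁻¹B·G⁻¹` is skew-symmetric, and
`(g+B)⁻¹ = G⁻¹ + Π` (so `G⁻¹` and `Π` are the symmetric and skew-symmetric
parts of `(g+B)⁻¹`). -/
theorem stmt_8 {n : ℕ} (g B : Matrix (Fin n) (Fin n) ℝ)
    (hg : g.PosDef) (hB : Bᵀ = -B) :
    ∀ G PiN : Matrix (Fin n) (Fin n) ℝ,
      G = g - B * g⁻¹ * B → PiN = -(g⁻¹ * B * G⁻¹) →
      IsUnit (g + B) ∧ G.PosDef ∧ PiNᵀ = -PiN ∧ (g + B)⁻¹ = G⁻¹ + PiN := by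
  intro G PiN hG hPi
  have hgu : IsUnit g := hg.isUnit
  have hginv : g⁻¹.PosDef := hg.inv
  have hgg : g * g⁻¹ = 1 := Matrix.mul_nonsing_inv g (Matrix.isUnit_iff_isUnit_det g |>.mp hgu)
  have hginvg : g⁻¹ * g = 1 := Matrix.nonsing_inv_mul g (Matrix.isUnit_iff_isUnit_det g |>.mp hgu)
  -- skew quadratic form vanishes
  have hskew0 : ∀ x : Fin n → ℝ, x ⬝ᵥ B *ᵥ x = 0 := by
    intro x
    have h1 : x ⬝ᵥ B *ᵥ x = Bᵀ *ᵥ x ⬝ᵥ x := by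
      rw [dotProduct_mulVec, mulVec_transpose]
    rw [hB, neg_mulVec, neg_dotProduct, dotProduct_comm] at h1
    rw [dotProduct_comm]
    linarith
  -- g + B invertible
  have hU : IsUnit (g + B) := by
    rw [Matrix.isUnit_iff_isUnit_det, isUnit_iff_ne_zero]
    intro hdet
    obtain ⟨v, hv, hv0⟩ := (Matrix.exists_mulVec_eq_zero_iff).mpr hdet
    have h2 : v ⬝ᵥ (g + B) *ᵥ v = 0 := by rw [hv0, dotProduct_zero]
    rw [add_mulVec, dotProduct_add, hskew0, add_zero] at h2
    have h3 := hg.dotProduct_mulVec_pos hv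
    simp only [star_trivial] at h3
    exact absurd h2 h3.ne'
  -- G pos def
  have hGpd : G.PosDef := by
    have hps : (Bᵀ * g⁻¹ * B).PosSemidef := hginv.posSemidef.conjTranspose_mul_mul_same B
    have hGe : G = g + Bᵀ * g⁻¹ * B := by rw [hG, hB]; noncomm_ring
    rw [hGe]
    exact hg.add_posSemidef hps
  have hGu : IsUnit G := hGpd.isUnit
  have hGG : G⁻¹ * G = 1 := Matrix.nonsing_inv_mul G (Matrix.isUnit_iff_isUnit_det G |>.mp hGu)
  have hGG' : G * G⁻¹ = 1 := Matrix.mul_nonsing_inv G (Matrix.isUnit_iff_isUnit_det G |>.mp hGu)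
  -- commutation: G * (g⁻¹ * B) = B * g⁻¹ * G
  have hcomm : G * (g⁻¹ * B) = B * g⁻¹ * G := by
    have e1 : g * (g⁻¹ * B) = B := by rw [← mul_assoc, hgg, one_mul]
    have e2 : B * g⁻¹ * g = B := by rw [mul_assoc, hginvg, mul_one]
    rw [hG, sub_mul, mul_sub, e1, e2]
    noncomm_ring
  -- Pi skew
  have hgsymm : g⁻¹ᵀ = g⁻¹ := by
    have := hginv.isHermitian.eq
    rwa [conjTranspose_eq_transpose_of_trivial] at this
  have hGsymm : G⁻¹ᵀ = G⁻¹ := by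
    have := hGpd.inv.isHermitian.eq
    rwa [conjTranspose_eq_transpose_of_trivial] at this
  have hswap : g⁻¹ * B * G⁻¹ = G⁻¹ * (B * g⁻¹) := by
    calc g⁻¹ * B * G⁻¹ = G⁻¹ * (G * (g⁻¹ * B)) * G⁻¹ := by
          rw [← mul_assoc, hGG, one_mul, mul_assoc]
      _ = G⁻¹ * (B * g⁻¹ * G) * G⁻¹ := by rw [hcomm]
      _ = G⁻¹ * (B * g⁻¹) := by rw [mul_assoc, mul_assoc, hGG', mul_one]
  have hskewPi : PiNᵀ = -PiN := by
    rw [hPi, transpose_neg, transpose_mul, transpose_mul, hB, hgsymm, hGsymm, neg_neg, hswap]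
    noncomm_ring
  -- inverse formula
  have hright : (g + B) * (G⁻¹ + PiN) = 1 := by
    have h1 : g * (g⁻¹ * B * G⁻¹) = B * G⁻¹ := by
      rw [← mul_assoc, ← mul_assoc, hgg, one_mul]
    calc (g + B) * (G⁻¹ + PiN)
        = g * G⁻¹ + B * G⁻¹ - g * (g⁻¹ * B * G⁻¹) - B * (g⁻¹ * B * G⁻¹) := by
          rw [hPi]; noncomm_ring
      _ = (g - B * g⁻¹ * B) * G⁻¹ := by rw [h1]; noncomm_ring
      _ = 1 := by rw [← hG, hGG']
  exact ⟨hU, hGpd, hskewPi, Matrix.inv_eq_right_inv hright⟩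
end

section
/- Let n ∈ ℕ and let G, G' be two generalized metrics, i.e., real symmetric positive definite 2n×2n matrices satisfying G J G = J and G' J G' = J. Then there exists a real 2n×2n matrix O with OᵀJO = J such that G' = OᵀGO. In other words, the group O(n,n) acts transitively on the set of generalized metrics. -/
open Matrix
open scoped MatrixOrder

lemma Jmat_transpose (n : ℕ) : (Jmat n)ᵀ = Jmat n := by
  simp [Jmat, Matrix.fromBlocks_transpose]

lemma Jmat_mul_Jmat (n : ℕ) : Jmat n * Jmat n = 1 := by
  simp [Jmat, Matrix.fromBlocks_multiply, ← Matrix.fromBlocks_one]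

/-- Any generalized metric is `OᵀO` for some `O ∈ O(n,n)`: take `O = √G`. -/
lemma exists_onn_factor (n : ℕ) (G : Matrix (Fin n ⊕ Fin n) (Fin n ⊕ Fin n) ℝ)
    (hG : G.PosDef) (h1 : G * Jmat n * G = Jmat n) :
    ∃ O : Matrix (Fin n ⊕ Fin n) (Fin n ⊕ Fin n) ℝ,
      Oᵀ * Jmat n * O = Jmat n ∧ G = Oᵀ * O ∧ IsUnit O.det := by
  set J := Jmat n with hJ
  have hJt : Jᵀ = J := Jmat_transpose n
  have hJJ : J * J = 1 := Jmat_mul_Jmat n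
  set S := CFC.sqrt G with hSdef
  have hS : S.PosSemidef := (CFC.sqrt_nonneg G).posSemidef
  have hSS : S * S = G := CFC.sqrt_mul_sqrt_self G hG.posSemidef.nonneg
  have hSt : Sᵀ = S := by
    rw [← Matrix.conjTranspose_eq_transpose_of_trivial]; exact hS.1
  have hdetS : IsUnit S.det := by
    have hdetG : (0:ℝ) < G.det := hG.det_pos
    have : S.det * S.det = G.det := by rw [← Matrix.det_mul, hSS]
    have hne : S.det ≠ 0 := by
      intro h; rw [h, mul_zero] at this; exact hdetG.ne' this.symm
    exact hne.isUnit
  -- G⁻¹ = J * G * J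
  have hGinv : G⁻¹ = J * G * J := by
    apply Matrix.inv_eq_right_inv
    calc G * (J * G * J) = (G * J * G) * J := by noncomm_ring
    _ = J * J := by rw [h1]
    _ = 1 := hJJ
  -- J*S*J and S⁻¹ are both posSemidef square roots of G⁻¹
  have hA : (J * S * J).PosSemidef := by
    have := hS.mul_mul_conjTranspose_same J
    have hJc : Jᴴ = J := by
      rw [Matrix.conjTranspose_eq_transpose_of_trivial, hJt]
    rwa [hJc] at this
  have hB : (S⁻¹).PosSemidef := hS.inv
  have hsq : (J * S * J) ^ 2 = (S⁻¹) ^ 2 := by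
    have h1' : (J * S * J) ^ 2 = J * G * J := by
      rw [pow_two]
      calc (J * S * J) * (J * S * J) = J * S * (J * J) * S * J := by noncomm_ring
      _ = J * (S * S) * J := by rw [hJJ]; noncomm_ring
      _ = J * G * J := by rw [hSS]
    have h2' : (S⁻¹) ^ 2 = G⁻¹ := by
      rw [pow_two, ← Matrix.mul_inv_rev, hSS]
    rw [h1', h2', hGinv]
  have hkey : J * S * J = S⁻¹ := by
    have := congrArg CFC.sqrt hsq
    rwa [pow_two, pow_two, CFC.sqrt_mul_self _ hA.nonneg, CFC.sqrt_mul_self _ hB.nonneg] at this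
  have hSJS : S * J * S = J := by
    have h3 : S * (J * S * J) = S * S⁻¹ := by rw [hkey]
    have h4 : S * S⁻¹ = 1 := Matrix.mul_nonsing_inv S hdetS
    have h5 : S * J * S * J = 1 := by
      calc S * J * S * J = S * (J * S * J) := by noncomm_ring
      _ = 1 := by rw [h3, h4]
    calc S * J * S = S * J * S * (J * J) := by rw [hJJ]; noncomm_ring
    _ = (S * J * S * J) * J := by noncomm_ring
    _ = J := by rw [h5, one_mul]
  exact ⟨S, by rw [hSt]; exact hSJS, by rw [hSt, hSS], hdetS⟩

/-- **Transitivity.** `O(n,n)` acts transitively on generalized metrics: for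
any two symmetric positive definite `2n×2n` matrices `G`, `G'` with
`GJG = J = G'JG'` there is `O` with `OᵀJO = J` and `G' = OᵀGO`. -/
theorem stmt_9 (n : ℕ) (G G' : Matrix (Fin n ⊕ Fin n) (Fin n ⊕ Fin n) ℝ)
    (hG : G.PosDef) (hG' : G'.PosDef)
    (h1 : G * Jmat n * G = Jmat n) (h2 : G' * Jmat n * G' = Jmat n) :
    ∃ O : Matrix (Fin n ⊕ Fin n) (Fin n ⊕ Fin n) ℝ,
      Oᵀ * Jmat n * O = Jmat n ∧ G' = Oᵀ * G * O := by
  obtain ⟨O, hO, hGO, hOdet⟩ := exists_onn_factor n G hG h1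
  obtain ⟨O', hO', hGO', _⟩ := exists_onn_factor n G' hG' h2
  have hOtdet : IsUnit (Oᵀ).det := by rwa [Matrix.det_transpose]
  refine ⟨O⁻¹ * O', ?_, ?_⟩
  · -- (O⁻¹O')ᵀ J (O⁻¹O') = O'ᵀ (Oᵀ)⁻¹ J O⁻¹ O' = O'ᵀ J O' = J
    have hJO : (Oᵀ)⁻¹ * Jmat n * O⁻¹ = Jmat n := by
      have := hO
      calc (Oᵀ)⁻¹ * Jmat n * O⁻¹ = (Oᵀ)⁻¹ * (Oᵀ * Jmat n * O) * O⁻¹ := by rw [hO]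
      _ = ((Oᵀ)⁻¹ * Oᵀ) * Jmat n * (O * O⁻¹) := by noncomm_ring
      _ = Jmat n := by
          rw [Matrix.nonsing_inv_mul _ hOtdet, Matrix.mul_nonsing_inv _ hOdet,
            one_mul, mul_one]
    calc (O⁻¹ * O')ᵀ * Jmat n * (O⁻¹ * O')
        = O'ᵀ * ((Oᵀ)⁻¹ * Jmat n * O⁻¹) * O' := by
          rw [Matrix.transpose_mul, Matrix.transpose_nonsing_inv]; noncomm_ring
    _ = O'ᵀ * Jmat n * O' := by rw [hJO]
    _ = Jmat n := hO'
  · calc G' = O'ᵀ * O' := hGO'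
    _ = O'ᵀ * ((Oᵀ)⁻¹ * (Oᵀ * O) * O⁻¹) * O' := by
        rw [show (Oᵀ)⁻¹ * (Oᵀ * O) * O⁻¹ = ((Oᵀ)⁻¹ * Oᵀ) * (O * O⁻¹) by noncomm_ring,
          Matrix.nonsing_inv_mul _ hOtdet, Matrix.mul_nonsing_inv _ hOdet, one_mul, mul_one]
    _ = (O⁻¹ * O')ᵀ * G * (O⁻¹ * O') := by
        rw [hGO, Matrix.transpose_mul, Matrix.transpose_nonsing_inv]; noncomm_ring
end

section
/- Let n ∈ ℕ and let G be a generalized metric, i.e., a real symmetric positive definite 2n×2n matrix satisfying G J G = J. Then the stabilizer subgroup { O ∈ GL(2n,ℝ) : OᵀJO = J and OᵀGO = G } is isomorphic as a group to O(n) × O(n), the direct product of two copies of the real orthogonal group of degree n. -/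
open Matrix

/-- The stabilizer `{O ∈ GL(2n,ℝ) : OᵀJO = J ∧ OᵀGO = G}` of a generalized
metric `G`, as a subgroup of the units of the matrix ring. -/
def stab (n : ℕ) (G : Matrix (Fin n ⊕ Fin n) (Fin n ⊕ Fin n) ℝ) :
    Subgroup (Matrix (Fin n ⊕ Fin n) (Fin n ⊕ Fin n) ℝ)ˣ where
  carrier := {O | (O : Matrix (Fin n ⊕ Fin n) (Fin n ⊕ Fin n) ℝ)ᵀ * Jmat n * O = Jmat n ∧
    (O : Matrix (Fin n ⊕ Fin n) (Fin n ⊕ Fin n) ℝ)ᵀ * G * O = G}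
  mul_mem' := by
    rintro a b ⟨ha1, ha2⟩ ⟨hb1, hb2⟩
    have key : ∀ M : Matrix (Fin n ⊕ Fin n) (Fin n ⊕ Fin n) ℝ,
        ((a * b : (Matrix (Fin n ⊕ Fin n) (Fin n ⊕ Fin n) ℝ)ˣ) :
          Matrix (Fin n ⊕ Fin n) (Fin n ⊕ Fin n) ℝ)ᵀ * M * ((a * b :
            (Matrix (Fin n ⊕ Fin n) (Fin n ⊕ Fin n) ℝ)ˣ)) =
          (b : Matrix (Fin n ⊕ Fin n) (Fin n ⊕ Fin n) ℝ)ᵀ *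
            ((a : Matrix (Fin n ⊕ Fin n) (Fin n ⊕ Fin n) ℝ)ᵀ * M * a) * b := by
      intro M
      simp [Units.val_mul, Matrix.transpose_mul, Matrix.mul_assoc]
    exact ⟨by rw [key, ha1, hb1], by rw [key, ha2, hb2]⟩
  one_mem' := by
    constructor <;> simp
  inv_mem' := by
    rintro a ⟨ha1, ha2⟩
    have key : ∀ M : Matrix (Fin n ⊕ Fin n) (Fin n ⊕ Fin n) ℝ,
        (a : Matrix (Fin n ⊕ Fin n) (Fin n ⊕ Fin n) ℝ)ᵀ * M * a = M →
        ((a⁻¹ : (Matrix (Fin n ⊕ Fin n) (Fin n ⊕ Fin n) ℝ)ˣ) :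
          Matrix (Fin n ⊕ Fin n) (Fin n ⊕ Fin n) ℝ)ᵀ * M *
          ((a⁻¹ : (Matrix (Fin n ⊕ Fin n) (Fin n ⊕ Fin n) ℝ)ˣ) :
            Matrix (Fin n ⊕ Fin n) (Fin n ⊕ Fin n) ℝ) = M := by
      intro M hM
      have h1 : ((a⁻¹ : (Matrix (Fin n ⊕ Fin n) (Fin n ⊕ Fin n) ℝ)ˣ) :
          Matrix (Fin n ⊕ Fin n) (Fin n ⊕ Fin n) ℝ)ᵀ *
          ((a : Matrix (Fin n ⊕ Fin n) (Fin n ⊕ Fin n) ℝ)ᵀ * M * a) *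
          ((a⁻¹ : (Matrix (Fin n ⊕ Fin n) (Fin n ⊕ Fin n) ℝ)ˣ) :
            Matrix (Fin n ⊕ Fin n) (Fin n ⊕ Fin n) ℝ) = M := by
        have hmul : (a : Matrix (Fin n ⊕ Fin n) (Fin n ⊕ Fin n) ℝ) *
            ((a⁻¹ : (Matrix (Fin n ⊕ Fin n) (Fin n ⊕ Fin n) ℝ)ˣ) :
              Matrix (Fin n ⊕ Fin n) (Fin n ⊕ Fin n) ℝ) = 1 := by
          rw [← Units.val_mul, mul_inv_cancel, Units.val_one]
        calc ((a⁻¹ : (Matrix (Fin n ⊕ Fin n) (Fin n ⊕ Fin n) ℝ)ˣ) :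
              Matrix (Fin n ⊕ Fin n) (Fin n ⊕ Fin n) ℝ)ᵀ *
              ((a : Matrix (Fin n ⊕ Fin n) (Fin n ⊕ Fin n) ℝ)ᵀ * M * a) *
              ((a⁻¹ : (Matrix (Fin n ⊕ Fin n) (Fin n ⊕ Fin n) ℝ)ˣ) :
                Matrix (Fin n ⊕ Fin n) (Fin n ⊕ Fin n) ℝ)
            = ((a : Matrix (Fin n ⊕ Fin n) (Fin n ⊕ Fin n) ℝ) *
                ((a⁻¹ : (Matrix (Fin n ⊕ Fin n) (Fin n ⊕ Fin n) ℝ)ˣ) :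
                  Matrix (Fin n ⊕ Fin n) (Fin n ⊕ Fin n) ℝ))ᵀ * M *
                ((a : Matrix (Fin n ⊕ Fin n) (Fin n ⊕ Fin n) ℝ) *
                ((a⁻¹ : (Matrix (Fin n ⊕ Fin n) (Fin n ⊕ Fin n) ℝ)ˣ) :
                  Matrix (Fin n ⊕ Fin n) (Fin n ⊕ Fin n) ℝ)) := by
              simp only [Matrix.transpose_mul, Matrix.mul_assoc]
          _ = M := by rw [hmul]; simp
      rw [hM] at h1
      exact h1
    exact ⟨key _ ha1, key _ ha2⟩

namespace StabAux

open Matrix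

/-- The diagonal form `diag(1, -1)` in blocks. -/
def Dmat (n : ℕ) : Matrix (Fin n ⊕ Fin n) (Fin n ⊕ Fin n) ℝ :=
  Matrix.fromBlocks 1 0 0 (-1)

lemma Jmat_transpose (n : ℕ) : (Jmat n)ᵀ = Jmat n := by
  simp [Jmat, Matrix.fromBlocks_transpose]

lemma Jmat_mul_Jmat (n : ℕ) : Jmat n * Jmat n = 1 := by
  rw [Jmat, Matrix.fromBlocks_multiply, ← Matrix.fromBlocks_one]
  congr 1 <;> simp

lemma star_eq_t {m : Type*} [Fintype m] [DecidableEq m] (M : Matrix m m ℝ) : star M = Mᵀ := by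
  rw [Matrix.star_eq_conjTranspose, Matrix.conjTranspose_eq_transpose_of_trivial]

lemma congr_mul {m : Type*} [Fintype m] [DecidableEq m] (x y M : Matrix m m ℝ) :
    (x * y)ᵀ * M * (x * y) = yᵀ * (xᵀ * M * x) * y := by
  simp only [Matrix.transpose_mul, Matrix.mul_assoc]

lemma congr_cancel {m : Type*} [Fintype m] [DecidableEq m] {x y : Matrix m m ℝ} (h : x * y = 1)
    (M : Matrix m m ℝ) : yᵀ * (xᵀ * M * x) * y = M := by
  rw [← congr_mul, h]
  simp

lemma conj_congr {m : Type*} [Fintype m] [DecidableEq m] {t t' b M N : Matrix m m ℝ} (htt' : t * t' = 1)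
    (hM : tᵀ * M * t = N) (hb : bᵀ * N * b = N) :
    (t * b * t')ᵀ * M * (t * b * t') = M := by
  rw [congr_mul (t * b) t' M, congr_mul t b M, hM, hb, ← hM]
  exact congr_cancel htt' M

lemma conj_congr' {m : Type*} [Fintype m] [DecidableEq m] {t t' o M : Matrix m m ℝ} (htt' : t * t' = 1)
    (ho : oᵀ * M * o = M) :
    (t' * o * t)ᵀ * (tᵀ * M * t) * (t' * o * t) = tᵀ * M * t := by
  rw [congr_mul (t' * o) t, congr_mul t' o, congr_cancel htt', ho]


lemma exists_T (n : ℕ) (G : Matrix (Fin n ⊕ Fin n) (Fin n ⊕ Fin n) ℝ)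
    (hG : G.PosDef) (hGJG : G * Jmat n * G = Jmat n) :
    ∃ T : (Matrix (Fin n ⊕ Fin n) (Fin n ⊕ Fin n) ℝ)ˣ,
      (T : Matrix (Fin n ⊕ Fin n) (Fin n ⊕ Fin n) ℝ)ᵀ * Jmat n * T = Dmat n ∧
      (T : Matrix (Fin n ⊕ Fin n) (Fin n ⊕ Fin n) ℝ)ᵀ * G * T = 1 := by
  classical
  obtain ⟨A, hA⟩ : ∃ A : Matrix (Fin n ⊕ Fin n) (Fin n ⊕ Fin n) ℝ, G = Aᴴ * A := by
    open scoped MatrixOrder in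
    obtain ⟨B, hB⟩ := CStarAlgebra.nonneg_iff_eq_star_mul_self.mp hG.posSemidef.nonneg
    exact ⟨B, by rw [hB, star_eq_conjTranspose]⟩
  have hG' : G = Aᵀ * A := by
    rw [hA, Matrix.conjTranspose_eq_transpose_of_trivial]
  have hdetA : IsUnit A.det := by
    have h1 : G.det = A.det * A.det := by rw [hG', Matrix.det_mul, Matrix.det_transpose]
    have h2 : G.det ≠ 0 := by
      have := hG.det_pos
      positivity
    rw [isUnit_iff_ne_zero]
    intro h
    rw [h, mul_zero] at h1
    exact h2 h1
  set Ai : Matrix (Fin n ⊕ Fin n) (Fin n ⊕ Fin n) ℝ := A⁻¹ with hAidef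
  have hAAi : A * Ai = 1 := Matrix.mul_nonsing_inv A hdetA
  have hAiA : Ai * A = 1 := Matrix.nonsing_inv_mul A hdetA
  set K : Matrix (Fin n ⊕ Fin n) (Fin n ⊕ Fin n) ℝ := Aiᵀ * Jmat n * Ai with hKdef
  have hKsymm : K.IsHermitian := by
    rw [Matrix.IsHermitian, Matrix.conjTranspose_eq_transpose_of_trivial, hKdef]
    calc (Aiᵀ * Jmat n * Ai)ᵀ = Aiᵀ * ((Jmat n)ᵀ * Aiᵀᵀ) := by
          simp only [Matrix.transpose_mul, Matrix.mul_assoc]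
      _ = Aiᵀ * Jmat n * Ai := by
          rw [Jmat_transpose, Matrix.transpose_transpose, Matrix.mul_assoc]
  have hGAiAit : G * (Ai * Aiᵀ) = 1 := by
    calc G * (Ai * Aiᵀ) = Aᵀ * ((A * Ai) * Aiᵀ) := by rw [hG']; simp only [Matrix.mul_assoc]
      _ = (Ai * A)ᵀ := by rw [hAAi, one_mul, Matrix.transpose_mul]
      _ = 1 := by rw [hAiA, Matrix.transpose_one]
  have hJAiAitJ : Jmat n * (Ai * Aiᵀ) * Jmat n = G := by
    conv_lhs => rw [← hGJG]
    calc G * Jmat n * G * (Ai * Aiᵀ) * (G * Jmat n * G)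
        = (G * Jmat n) * (G * (Ai * Aiᵀ)) * (G * Jmat n * G) := by
          simp only [Matrix.mul_assoc]
      _ = (G * Jmat n) * (G * Jmat n * G) := by rw [hGAiAit, mul_one]
      _ = (G * Jmat n * G) * (Jmat n * G) := by simp only [Matrix.mul_assoc]
      _ = Jmat n * (Jmat n * G) := by rw [hGJG]
      _ = G := by rw [← Matrix.mul_assoc, Jmat_mul_Jmat, one_mul]
  have hKK : K * K = 1 := by
    calc K * K = Aiᵀ * (Jmat n * (Ai * Aiᵀ) * Jmat n) * Ai := by
          rw [hKdef]; simp only [Matrix.mul_assoc]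
      _ = Aiᵀ * G * Ai := by rw [hJAiAitJ]
      _ = Aiᵀ * (Aᵀ * 1 * A) * Ai := by rw [mul_one, ← hG']
      _ = 1 := by rw [congr_cancel hAAi]
  -- spectral theorem
  set U : Matrix (Fin n ⊕ Fin n) (Fin n ⊕ Fin n) ℝ := (hKsymm.eigenvectorUnitary :
    Matrix (Fin n ⊕ Fin n) (Fin n ⊕ Fin n) ℝ) with hUdef
  have hUU : star U * U = 1 := (Unitary.mem_iff.mp hKsymm.eigenvectorUnitary.2).1
  have hUstar : U * star U = 1 := (Unitary.mem_iff.mp hKsymm.eigenvectorUnitary.2).2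
  set μ : (Fin n ⊕ Fin n) → ℝ := hKsymm.eigenvalues with hμdef
  have hspec : star U * K * U = Matrix.diagonal μ := by
    have h := hKsymm.conjStarAlgAut_star_eigenvectorUnitary
    rw [Unitary.conjStarAlgAut_star_apply] at h
    rwa [RCLike.ofReal_real_eq_id, Function.id_comp] at h
  have hKU : K * U = U * Matrix.diagonal μ := by
    calc K * U = (U * star U) * K * U := by rw [hUstar, one_mul]
      _ = U * (star U * K * U) := by simp only [Matrix.mul_assoc]
      _ = U * Matrix.diagonal μ := by rw [hspec]
  have hstarUt : star U = Uᵀ := star_eq_t U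
  have hμ : ∀ i, μ i = 1 ∨ μ i = -1 := by
    intro i
    have hdd : Matrix.diagonal μ * Matrix.diagonal μ = 1 := by
      calc Matrix.diagonal μ * Matrix.diagonal μ
          = (star U * K * U) * (star U * K * U) := by rw [hspec]
        _ = star U * (K * ((U * star U) * (K * U))) := by simp only [Matrix.mul_assoc]
        _ = star U * (K * K * U) := by rw [hUstar, one_mul, ← Matrix.mul_assoc K K U]
        _ = 1 := by rw [hKK, one_mul, hUU]
    have h := congrFun (congrFun hdd i) i
    simp only [Matrix.diagonal_mul_diagonal] at h
    rw [Matrix.diagonal_apply_eq] at h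
    have h1 : (1 : Matrix (Fin n ⊕ Fin n) (Fin n ⊕ Fin n) ℝ) i i = 1 := Matrix.one_apply_eq i
    rw [h1] at h
    exact mul_self_eq_one_iff.mp (by simpa using h)
  -- multiplicity bound
  have key : ∀ ε : ℝ, ε ≠ 0 → Fintype.card {i // μ i = ε} ≤ n := by
    intro ε hε
    set Bm : Matrix (Fin n) {i // μ i = ε} ℝ :=
      ((Ai * U).submatrix Sum.inl (Subtype.val)) with hBmdef
    have hinj : Function.Injective Bm.mulVecLin := by
      rw [← LinearMap.ker_eq_bot, LinearMap.ker_eq_bot']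
      intro c hc
      set c' : (Fin n ⊕ Fin n) → ℝ := fun i => if h : μ i = ε then c ⟨i, h⟩ else 0 with hc'def
      have hdiagc' : Matrix.diagonal μ *ᵥ c' = ε • c' := by
        funext i
        rw [Matrix.mulVec_diagonal]
        by_cases h : μ i = ε
        · simp [hc'def, h]
        · simp [hc'def, h]
      set v : (Fin n ⊕ Fin n) → ℝ := U *ᵥ c' with hvdef
      have hKv : K *ᵥ v = ε • v := by
        rw [hvdef, Matrix.mulVec_mulVec, hKU, ← Matrix.mulVec_mulVec, hdiagc',
          Matrix.mulVec_smul]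
      set w : (Fin n ⊕ Fin n) → ℝ := Ai *ᵥ v with hwdef
      have hAw : A *ᵥ w = v := by rw [hwdef, Matrix.mulVec_mulVec, hAAi, Matrix.one_mulVec]
      have hJw : Jmat n *ᵥ w = ε • (G *ᵥ w) := by
        have h2 : Aᵀ * K = Jmat n * Ai := by
          calc Aᵀ * (Aiᵀ * Jmat n * Ai) = (Ai * A)ᵀ * (Jmat n * Ai) := by
                rw [Matrix.transpose_mul]; simp only [Matrix.mul_assoc]
            _ = Jmat n * Ai := by rw [hAiA, Matrix.transpose_one, one_mul]
        have h1 : Aᵀ *ᵥ (K *ᵥ v) = Jmat n *ᵥ w := by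
          rw [Matrix.mulVec_mulVec, h2, ← Matrix.mulVec_mulVec]
        have h3 : Aᵀ *ᵥ (ε • v) = ε • (G *ᵥ w) := by
          rw [Matrix.mulVec_smul, ← hAw, Matrix.mulVec_mulVec, ← hG']
        rw [← h1, hKv, h3]
      have hw1 : ∀ j, w (Sum.inl j) = 0 := by
        intro j
        have h4 : w = (Ai * U) *ᵥ c' := by rw [hwdef, hvdef, Matrix.mulVec_mulVec]
        have h5 : (Bm *ᵥ c) j = 0 := by
          have := congrFun hc j
          simpa [Matrix.mulVecLin_apply] using this
        rw [h4]
        show ∑ i, (Ai * U) (Sum.inl j) i * c' i = 0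
        rw [← Fintype.sum_subtype_add_sum_subtype (fun i => μ i = ε)
          (fun i => (Ai * U) (Sum.inl j) i * c' i)]
        have hz : ∀ s : {x // ¬ μ x = ε}, (Ai * U) (Sum.inl j) s.val * c' s.val = 0 := by
          intro s
          simp [hc'def, s.2]
        rw [Finset.sum_congr rfl (fun s _ => hz s), Finset.sum_const_zero, add_zero]
        rw [← h5]
        show _ = ∑ s : {i // μ i = ε}, Bm j s * c s
        apply Finset.sum_congr rfl
        intro s _
        simp [hBmdef, hc'def, s.2]
      have hdot : w ⬝ᵥ (Jmat n *ᵥ w) = 0 := by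
        simp [dotProduct, Matrix.mulVec, Fintype.sum_sum_type, Jmat, hw1]
      have hGdot : w ⬝ᵥ (G *ᵥ w) = 0 := by
        rw [hJw, dotProduct_smul, smul_eq_mul] at hdot
        exact (mul_eq_zero.mp hdot).resolve_left hε
      have hw0 : w = 0 := by
        by_contra hcon
        have hpos := hG.dotProduct_mulVec_pos hcon
        rw [star_trivial] at hpos
        rw [hGdot] at hpos
        exact lt_irrefl 0 hpos
      have hv0 : v = 0 := by rw [← hAw, hw0, Matrix.mulVec_zero]
      have hc'0 : c' = 0 := by
        have h6 : (star U) *ᵥ v = c' := by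
          rw [hvdef, Matrix.mulVec_mulVec, hUU, Matrix.one_mulVec]
        rw [← h6, hv0, Matrix.mulVec_zero]
      funext s
      have h7 := congrFun hc'0 s.val
      simpa [hc'def, s.2] using h7
    calc Fintype.card {i // μ i = ε}
        = Module.finrank ℝ ({i // μ i = ε} → ℝ) :=
          (Module.finrank_fintype_fun_eq_card ℝ).symm
      _ ≤ Module.finrank ℝ (Fin n → ℝ) := LinearMap.finrank_le_finrank_of_injective hinj
      _ = n := by simp [Module.finrank_fintype_fun_eq_card]
  -- exact counts
  have hcompl : ∀ i, ¬ (μ i = 1) ↔ μ i = -1 := by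
    intro i
    rcases hμ i with h | h <;> simp [h] <;> norm_num
  have hcard1 : Fintype.card {i // μ i = 1} ≤ n := key 1 one_ne_zero
  have hcardm : Fintype.card {i // μ i = -1} ≤ n := key (-1) (by norm_num)
  have hcardc : Fintype.card {i // ¬ (μ i = 1)} = Fintype.card {i // μ i = -1} :=
    Fintype.card_congr (Equiv.subtypeEquivRight hcompl)
  have hsum : Fintype.card {i // μ i = 1} + Fintype.card {i // ¬ (μ i = 1)} = n + n := by
    have h8 := Fintype.card_congr (Equiv.sumCompl (fun i => μ i = 1))
    simpa [Fintype.card_sum] using h8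
  have h₁ : Fintype.card {i // μ i = 1} = n := by omega
  have h₂ : Fintype.card {i // ¬ (μ i = 1)} = n := by omega
  set e : (Fin n ⊕ Fin n) ≃ (Fin n ⊕ Fin n) :=
    (Equiv.sumCongr (Fintype.equivFinOfCardEq h₁).symm
      (Fintype.equivFinOfCardEq h₂).symm).trans (Equiv.sumCompl (fun i => μ i = 1)) with hedef
  have hμe : ∀ x, μ (e x) = Sum.elim (fun _ : Fin n => (1 : ℝ)) (fun _ : Fin n => (-1 : ℝ)) x := by
    rintro (a | a)
    · show μ ((Equiv.sumCompl (fun i => μ i = 1))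
        (Sum.inl ((Fintype.equivFinOfCardEq h₁).symm a))) = 1
      rw [Equiv.sumCompl_apply_inl]
      exact ((Fintype.equivFinOfCardEq h₁).symm a).2
    · show μ ((Equiv.sumCompl (fun i => μ i = 1))
        (Sum.inr ((Fintype.equivFinOfCardEq h₂).symm a))) = -1
      rw [Equiv.sumCompl_apply_inr]
      exact (hcompl _).mp ((Fintype.equivFinOfCardEq h₂).symm a).2
  set Q : Matrix (Fin n ⊕ Fin n) (Fin n ⊕ Fin n) ℝ := U.submatrix id e with hQdef
  have hconjQ : ∀ M : Matrix (Fin n ⊕ Fin n) (Fin n ⊕ Fin n) ℝ,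
      Qᵀ * M * Q = (Uᵀ * M * U).submatrix ⇑e ⇑e := by
    intro M
    ext i j
    simp only [Matrix.mul_apply, Matrix.submatrix_apply, Matrix.transpose_apply, hQdef, id]
  have hUtU : Uᵀ * U = 1 := by rw [← hstarUt]; exact hUU
  have hQtQ : Qᵀ * Q = 1 := by
    have h9 : Qᵀ * Q = Qᵀ * 1 * Q := by rw [mul_one]
    rw [h9, hconjQ, mul_one, hUtU, Matrix.submatrix_one_equiv]
  have hQKQ : Qᵀ * K * Q = Dmat n := by
    have hUKU : Uᵀ * K * U = Matrix.diagonal μ := by rw [← hstarUt]; exact hspec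
    rw [hconjQ, hUKU, Matrix.submatrix_diagonal_equiv]
    ext i j
    rcases i with a | a <;> rcases j with b | b <;>
      simp [Matrix.diagonal_apply, Dmat, hμe, Matrix.one_apply, Sum.inl.injEq, Sum.inr.injEq] <;>
      by_cases hab : a = b <;> simp [hab]
  have hQQt : Q * Qᵀ = 1 := mul_eq_one_comm.mp hQtQ
  refine ⟨⟨Ai * Q, Qᵀ * A, ?_, ?_⟩, ?_, ?_⟩
  · calc Ai * Q * (Qᵀ * A) = Ai * (Q * Qᵀ) * A := by simp only [Matrix.mul_assoc]
      _ = 1 := by rw [hQQt, mul_one, hAiA]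
  · calc Qᵀ * A * (Ai * Q) = Qᵀ * (A * Ai) * Q := by simp only [Matrix.mul_assoc]
      _ = 1 := by rw [hAAi, mul_one, hQtQ]
  · show (Ai * Q)ᵀ * Jmat n * (Ai * Q) = Dmat n
    rw [congr_mul Ai Q (Jmat n), ← hKdef, hQKQ]
  · show (Ai * Q)ᵀ * G * (Ai * Q) = 1
    rw [congr_mul Ai Q G]
    have h10 : Aiᵀ * G * Ai = 1 := by
      have h11 : Aiᵀ * G * Ai = Aiᵀ * (Aᵀ * 1 * A) * Ai := by rw [mul_one, ← hG']
      rw [h11, congr_cancel hAAi]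
    rw [h10, mul_one, hQtQ]

end StabAux

/-- **Stabilizer of a generalized metric.** The stabilizer in `O(n,n)` of a
generalized metric `G` is isomorphic to `O(n) × O(n)`. -/
theorem stmt_10 (n : ℕ) (G : Matrix (Fin n ⊕ Fin n) (Fin n ⊕ Fin n) ℝ)
    (hG : G.PosDef) (hGJG : G * Jmat n * G = Jmat n) :
    Nonempty (stab n G ≃*
      Matrix.orthogonalGroup (Fin n) ℝ × Matrix.orthogonalGroup (Fin n) ℝ) := by
  classical
  obtain ⟨T, hTJ, hTG⟩ := StabAux.exists_T n G hG hGJG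
  set t : Matrix (Fin n ⊕ Fin n) (Fin n ⊕ Fin n) ℝ := (↑T : Matrix (Fin n ⊕ Fin n) (Fin n ⊕ Fin n) ℝ) with htdef
  set t' : Matrix (Fin n ⊕ Fin n) (Fin n ⊕ Fin n) ℝ :=
    (↑(T⁻¹) : Matrix (Fin n ⊕ Fin n) (Fin n ⊕ Fin n) ℝ) with ht'def
  have htt' : t * t' = 1 := by rw [htdef, ht'def, ← Units.val_mul, mul_inv_cancel, Units.val_one]
  have hstarm : ∀ m : Matrix (Fin n) (Fin n) ℝ, star m = mᵀ := fun m => StabAux.star_eq_t m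
  -- the block-diagonal unit associated to a pair of orthogonal matrices
  have horth : ∀ a : Matrix.orthogonalGroup (Fin n) ℝ,
      ((a : Matrix (Fin n) (Fin n) ℝ)ᵀ * a = 1) ∧ ((a : Matrix (Fin n) (Fin n) ℝ) * (a : Matrix (Fin n) (Fin n) ℝ)ᵀ = 1) := by
    intro a
    have h1 := (Unitary.mem_iff.mp a.2).1
    have h2 := (Unitary.mem_iff.mp a.2).2
    rw [hstarm] at h1 h2
    exact ⟨h1, h2⟩
  let bu : Matrix.orthogonalGroup (Fin n) ℝ × Matrix.orthogonalGroup (Fin n) ℝ →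
      (Matrix (Fin n ⊕ Fin n) (Fin n ⊕ Fin n) ℝ)ˣ := fun p =>
    { val := Matrix.fromBlocks p.1 0 0 p.2
      inv := Matrix.fromBlocks (p.1 : Matrix (Fin n) (Fin n) ℝ)ᵀ 0 0 (p.2 : Matrix (Fin n) (Fin n) ℝ)ᵀ
      val_inv := by
        rw [Matrix.fromBlocks_multiply]
        simp [(horth p.1).2, (horth p.2).2, Matrix.fromBlocks_one]
      inv_val := by
        rw [Matrix.fromBlocks_multiply]
        simp [(horth p.1).1, (horth p.2).1, Matrix.fromBlocks_one] }
  have hbuval : ∀ p, (bu p : Matrix (Fin n ⊕ Fin n) (Fin n ⊕ Fin n) ℝ) =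
      Matrix.fromBlocks p.1 0 0 p.2 := fun p => rfl
  have hbu_mul : ∀ p q, bu (p * q) = bu p * bu q := by
    intro p q
    apply Units.ext
    rw [Units.val_mul, hbuval, hbuval, hbuval, Matrix.fromBlocks_multiply]
    simp
  have hbu_one : bu 1 = 1 := by
    apply Units.ext
    rw [hbuval]
    simp [Matrix.fromBlocks_one]
  let f₀ : Matrix.orthogonalGroup (Fin n) ℝ × Matrix.orthogonalGroup (Fin n) ℝ →*
      (Matrix (Fin n ⊕ Fin n) (Fin n ⊕ Fin n) ℝ)ˣ :=
    { toFun := fun p => T * bu p * T⁻¹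
      map_one' := by rw [hbu_one, mul_one, mul_inv_cancel]
      map_mul' := by
        intro p q
        rw [hbu_mul]
        simp only [mul_assoc, inv_mul_cancel_left] }
  have hf₀val : ∀ p, (f₀ p : Matrix (Fin n ⊕ Fin n) (Fin n ⊕ Fin n) ℝ) =
      t * Matrix.fromBlocks p.1 0 0 p.2 * t' := by
    intro p
    have h0 : f₀ p = T * bu p * T⁻¹ := rfl
    rw [h0, Units.val_mul, Units.val_mul, hbuval, ← htdef, ← ht'def]
  have hbD : ∀ p : Matrix.orthogonalGroup (Fin n) ℝ × Matrix.orthogonalGroup (Fin n) ℝ,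
      (Matrix.fromBlocks (p.1 : Matrix (Fin n) (Fin n) ℝ) 0 0 (p.2 : Matrix (Fin n) (Fin n) ℝ))ᵀ *
        StabAux.Dmat n * Matrix.fromBlocks p.1 0 0 p.2 = StabAux.Dmat n := by
    intro p
    rw [StabAux.Dmat, Matrix.fromBlocks_transpose, Matrix.fromBlocks_multiply,
      Matrix.fromBlocks_multiply]
    simp [(horth p.1).1, (horth p.2).1, Matrix.neg_mul, Matrix.mul_neg]
  have hb1 : ∀ p : Matrix.orthogonalGroup (Fin n) ℝ × Matrix.orthogonalGroup (Fin n) ℝ,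
      (Matrix.fromBlocks (p.1 : Matrix (Fin n) (Fin n) ℝ) 0 0 (p.2 : Matrix (Fin n) (Fin n) ℝ))ᵀ *
        1 * Matrix.fromBlocks p.1 0 0 p.2 = 1 := by
    intro p
    rw [mul_one, Matrix.fromBlocks_transpose, Matrix.fromBlocks_multiply]
    simp [(horth p.1).1, (horth p.2).1, Matrix.fromBlocks_one]
  have hmem : ∀ p, f₀ p ∈ stab n G := by
    intro p
    constructor
    · rw [hf₀val]
      exact StabAux.conj_congr htt' hTJ (hbD p)
    · rw [hf₀val]
      exact StabAux.conj_congr htt' hTG (hb1 p)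
  let f : Matrix.orthogonalGroup (Fin n) ℝ × Matrix.orthogonalGroup (Fin n) ℝ →* stab n G :=
    f₀.codRestrict (stab n G) hmem
  have hfinj : Function.Injective f := by
    intro p q h
    have h' : f₀ p = f₀ q := congrArg Subtype.val h
    have h'' : bu p = bu q := by
      have h1 : T * bu p * T⁻¹ = T * bu q * T⁻¹ := h'
      exact mul_left_cancel (mul_right_cancel h1)
    have h3 : (Matrix.fromBlocks (p.1 : Matrix (Fin n) (Fin n) ℝ) 0 0 (p.2 : Matrix (Fin n) (Fin n) ℝ))
        = Matrix.fromBlocks q.1 0 0 q.2 := by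
      have := congrArg Units.val h''
      rwa [hbuval, hbuval] at this
    have h4 := congrArg Matrix.toBlocks₁₁ h3
    have h5 := congrArg Matrix.toBlocks₂₂ h3
    rw [Matrix.toBlocks_fromBlocks₁₁, Matrix.toBlocks_fromBlocks₁₁] at h4
    rw [Matrix.toBlocks_fromBlocks₂₂, Matrix.toBlocks_fromBlocks₂₂] at h5
    exact Prod.ext (Subtype.ext h4) (Subtype.ext h5)
  have hfsurj : Function.Surjective f := by
    rintro ⟨O, hO1, hO2⟩
    set r : Matrix (Fin n ⊕ Fin n) (Fin n ⊕ Fin n) ℝ := t' * O * t with hrdef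
    have hrD : rᵀ * StabAux.Dmat n * r = StabAux.Dmat n := by
      rw [← hTJ]
      exact StabAux.conj_congr' htt' hO1
    have hr1 : rᵀ * r = 1 := by
      have h1 : rᵀ * 1 * r = 1 := by
        rw [← hTG]
        exact StabAux.conj_congr' htt' hO2
      rwa [mul_one] at h1
    have hrr : r * rᵀ = 1 := mul_eq_one_comm.mp hr1
    have hDr : StabAux.Dmat n * r = r * StabAux.Dmat n := by
      calc StabAux.Dmat n * r = (r * rᵀ) * (StabAux.Dmat n * r) := by rw [hrr, one_mul]
        _ = r * (rᵀ * StabAux.Dmat n * r) := by simp only [Matrix.mul_assoc]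
        _ = r * StabAux.Dmat n := by rw [hrD]
    set a := r.toBlocks₁₁ with hadef
    set b := r.toBlocks₁₂ with hbdef
    set c := r.toBlocks₂₁ with hcdef
    set d := r.toBlocks₂₂ with hddef
    have hrblocks : r = Matrix.fromBlocks a b c d := (Matrix.fromBlocks_toBlocks r).symm
    rw [hrblocks, StabAux.Dmat, Matrix.fromBlocks_multiply, Matrix.fromBlocks_multiply] at hDr
    have hDr' := Matrix.fromBlocks_inj.mp hDr
    have hb0 : b = 0 := by
      have h2 : b = -b := by
        have h1 := hDr'.2.1
        simp only [one_mul, zero_mul, add_zero, mul_zero, zero_add, Matrix.mul_neg,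
          mul_one] at h1
        simpa using h1
      have h3 : b + b = 0 := by nth_rewrite 1 [h2]; simp
      have h4 : (2 : ℝ) • b = 0 := by rw [two_smul]; exact h3
      simpa using (smul_eq_zero.mp h4).resolve_left (by norm_num)
    have hc0 : c = 0 := by
      have h2 : -c = c := by
        have h1 := hDr'.2.2.1
        simp only [one_mul, zero_mul, add_zero, mul_zero, zero_add, mul_one,
          Matrix.neg_mul] at h1
        exact h1
      have h3 : c + c = 0 := by nth_rewrite 1 [← h2]; simp
      have h4 : (2 : ℝ) • c = 0 := by rw [two_smul]; exact h3
      simpa using (smul_eq_zero.mp h4).resolve_left (by norm_num)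
    have hrblocks' : r = Matrix.fromBlocks a 0 0 d := by rw [hrblocks, hb0, hc0]
    have hr1' : aᵀ * a = 1 ∧ dᵀ * d = 1 := by
      have h1 := hr1
      rw [hrblocks', Matrix.fromBlocks_transpose, Matrix.fromBlocks_multiply,
        ← Matrix.fromBlocks_one] at h1
      have h2 := Matrix.fromBlocks_inj.mp h1
      constructor
      · have := h2.1; simpa using this
      · have := h2.2.2.2; simpa using this
    have ha : a ∈ Matrix.orthogonalGroup (Fin n) ℝ := by
      rw [Matrix.mem_orthogonalGroup_iff']
      exact hr1'.1
    have hd : d ∈ Matrix.orthogonalGroup (Fin n) ℝ := by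
      rw [Matrix.mem_orthogonalGroup_iff']
      exact hr1'.2
    refine ⟨(⟨a, ha⟩, ⟨d, hd⟩), ?_⟩
    apply Subtype.ext
    show (f₀ (⟨a, ha⟩, ⟨d, hd⟩) : (Matrix (Fin n ⊕ Fin n) (Fin n ⊕ Fin n) ℝ)ˣ) = O
    have hbuO : bu (⟨a, ha⟩, ⟨d, hd⟩) = T⁻¹ * O * T := by
      apply Units.ext
      rw [hbuval, Units.val_mul, Units.val_mul]
      show Matrix.fromBlocks a 0 0 d = t' * (O : Matrix (Fin n ⊕ Fin n) (Fin n ⊕ Fin n) ℝ) * t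
      rw [← hrdef, hrblocks']
    show T * bu (⟨a, ha⟩, ⟨d, hd⟩) * T⁻¹ = O
    rw [hbuO]
    group
  exact ⟨(MulEquiv.ofBijective f ⟨hfinj, hfsurj⟩).symm⟩
end

section
/- Let g be a real symmetric positive definite n×n matrix, B a real skew-symmetric n×n matrix, and O a real 2n×2n matrix with OᵀJO = J, written in n×n blocks O = [[O₁,O₂],[O₃,O₄]]. Set A := g + B. Then: (i) there exist a unique symmetric positive definite g' and a unique skew-symmetric B' such that Oᵀ·𝐆(g,B)·O = 𝐆(g',B'); (ii) the matrices Φ₊ := O₄ᵀ + O₂ᵀA and Φ₋ := O₄ᵀ − O₂ᵀAᵀ are invertible; (iii) g'⁻¹ = Φ₊ g⁻¹ Φ₊ᵀ = Φ₋ g⁻¹ Φ₋ᵀ; and (iv) g' + B' = (O₃ᵀ + O₁ᵀA)·Φ₊⁻¹. -/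
open Matrix

/-- The generalized metric `𝐆(g,B) = [[g − Bg⁻¹B, Bg⁻¹],[−g⁻¹B, g⁻¹]]`. -/
noncomputable def genMet (n : ℕ) (g B : Matrix (Fin n) (Fin n) ℝ) :
    Matrix (Fin n ⊕ Fin n) (Fin n ⊕ Fin n) ℝ :=
  Matrix.fromBlocks (g - B * g⁻¹ * B) (B * g⁻¹) (-(g⁻¹ * B)) g⁻¹

section aux
variable {m : Type*} [Fintype m] [DecidableEq m]

lemma aux_posDef_conj {A C : Matrix m m ℝ} (hA : A.PosDef) (hC : IsUnit C.det) :
    (Cᵀ * A * C).PosDef := by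
  refine Matrix.posDef_iff_dotProduct_mulVec.mpr ⟨?_, ?_⟩
  · have h := isHermitian_conjTranspose_mul_mul C hA.1
    rwa [conjTranspose_eq_transpose_of_trivial] at h
  · intro x hx
    have hCx : C *ᵥ x ≠ 0 := by
      intro h0
      apply hx
      have hinj := Matrix.mulVec_injective_iff_isUnit.mpr ((Matrix.isUnit_iff_isUnit_det C).mpr hC)
      exact hinj (by simpa using h0)
    have h := hA.dotProduct_mulVec_pos (x := C *ᵥ x) hCx
    simpa [← Matrix.mulVec_mulVec, Matrix.dotProduct_mulVec, Matrix.vecMul_transpose,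
      Matrix.mul_assoc] using h

omit [DecidableEq m] in
lemma aux_posDef_fromBlocks {A D : Matrix m m ℝ} (hA : A.PosDef) (hD : D.PosDef) :
    (fromBlocks A 0 0 D).PosDef := by
  refine Matrix.posDef_iff_dotProduct_mulVec.mpr ⟨?_, ?_⟩
  · show (fromBlocks A 0 0 D)ᴴ = fromBlocks A 0 0 D
    rw [conjTranspose_eq_transpose_of_trivial, fromBlocks_transpose, transpose_zero]
    have hAT : Aᵀ = A := by
      have := hA.1.eq; rwa [conjTranspose_eq_transpose_of_trivial] at this
    have hDT : Dᵀ = D := by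
      have := hD.1.eq; rwa [conjTranspose_eq_transpose_of_trivial] at this
    rw [hAT, hDT]
  · intro x hx
    have hxe : x = Sum.elim (x ∘ Sum.inl) (x ∘ Sum.inr) := by funext i; cases i <;> rfl
    rw [fromBlocks_mulVec]
    simp only [zero_mulVec, add_zero, zero_add, star_trivial]
    rw [hxe, sumElim_dotProduct_sumElim]
    have hne : x ∘ Sum.inl ≠ 0 ∨ x ∘ Sum.inr ≠ 0 := by
      by_contra hc
      push_neg at hc
      apply hx
      funext i
      cases i with
      | inl i => exact congrFun hc.1 i
      | inr i => exact congrFun hc.2 i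
    have hAnn : ∀ u : m → ℝ, 0 ≤ u ⬝ᵥ A *ᵥ u := fun u => by
      simpa using hA.posSemidef.dotProduct_mulVec_nonneg u
    have hDnn : ∀ u : m → ℝ, 0 ≤ u ⬝ᵥ D *ᵥ u := fun u => by
      simpa using hD.posSemidef.dotProduct_mulVec_nonneg u
    rcases hne with h | h
    · exact add_pos_of_pos_of_nonneg (by simpa using hA.dotProduct_mulVec_pos h) (hDnn _)
    · exact add_pos_of_nonneg_of_pos (hAnn _) (by simpa using hD.dotProduct_mulVec_pos h)

omit [DecidableEq m] in
lemma aux_posDef_toBlocks₂₂ {A : Matrix (m ⊕ m) (m ⊕ m) ℝ} (hA : A.PosDef) :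
    (A.toBlocks₂₂).PosDef := by
  refine Matrix.posDef_iff_dotProduct_mulVec.mpr ⟨?_, ?_⟩
  · show (A.toBlocks₂₂)ᴴ = A.toBlocks₂₂
    ext i j
    have h := congrFun (congrFun hA.1.eq (Sum.inr i)) (Sum.inr j)
    simpa [toBlocks₂₂, conjTranspose_apply] using h
  · intro x hx
    have hx' : (Sum.elim (0 : m → ℝ) x) ≠ 0 := by
      intro h0
      apply hx
      funext i
      exact congrFun h0 (Sum.inr i)
    have h := hA.dotProduct_mulVec_pos (x := Sum.elim 0 x) hx'
    rw [show A = fromBlocks A.toBlocks₁₁ A.toBlocks₁₂ A.toBlocks₂₁ A.toBlocks₂₂ from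
      (fromBlocks_toBlocks A).symm, fromBlocks_mulVec] at h
    simpa using h

end aux

set_option maxHeartbeats 2000000 in
/-- **Orthogonal transformation of the generalized metric.** For an `O(n,n)`
matrix `O = [[O₁,O₂],[O₃,O₄]]` acting on `𝐆(g,B)`: there is a unique pair
`(g',B')` of a symmetric positive definite and a skew-symmetric matrix with
`Oᵀ𝐆(g,B)O = 𝐆(g',B')`; the maps `Φ₊ = O₄ᵀ + O₂ᵀ(g+B)` and
`Φ₋ = O₄ᵀ − O₂ᵀ(g+B)ᵀ` are invertible; `g'⁻¹ = Φ± g⁻¹ Φ±ᵀ`; and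
`g' + B' = (O₃ᵀ + O₁ᵀ(g+B))Φ₊⁻¹`. -/
theorem stmt_11 (n : ℕ) (g B O₁ O₂ O₃ O₄ : Matrix (Fin n) (Fin n) ℝ)
    (hg : g.PosDef) (hB : Bᵀ = -B)
    (hO : (fromBlocks O₁ O₂ O₃ O₄)ᵀ * Jmat n * fromBlocks O₁ O₂ O₃ O₄ = Jmat n) :
    (∃! p : Matrix (Fin n) (Fin n) ℝ × Matrix (Fin n) (Fin n) ℝ,
      p.1.PosDef ∧ p.2ᵀ = -p.2 ∧
      (fromBlocks O₁ O₂ O₃ O₄)ᵀ * genMet n g B * fromBlocks O₁ O₂ O₃ O₄ =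
        genMet n p.1 p.2) ∧
    IsUnit (O₄ᵀ + O₂ᵀ * (g + B)) ∧
    IsUnit (O₄ᵀ - O₂ᵀ * (g + B)ᵀ) ∧
    ∀ g' B' : Matrix (Fin n) (Fin n) ℝ, g'.PosDef → B'ᵀ = -B' →
      (fromBlocks O₁ O₂ O₃ O₄)ᵀ * genMet n g B * fromBlocks O₁ O₂ O₃ O₄ =
        genMet n g' B' →
      g'⁻¹ = (O₄ᵀ + O₂ᵀ * (g + B)) * g⁻¹ * (O₄ᵀ + O₂ᵀ * (g + B))ᵀ ∧
      g'⁻¹ = (O₄ᵀ - O₂ᵀ * (g + B)ᵀ) * g⁻¹ * (O₄ᵀ - O₂ᵀ * (g + B)ᵀ)ᵀ ∧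
      g' + B' = (O₃ᵀ + O₁ᵀ * (g + B)) * (O₄ᵀ + O₂ᵀ * (g + B))⁻¹ := by
  -- basic facts
  have hgT : gᵀ = g := by
    have := hg.1.eq; rwa [conjTranspose_eq_transpose_of_trivial] at this
  have hgd : IsUnit g.det := isUnit_iff_ne_zero.mpr hg.det_pos.ne'
  have hginvd : IsUnit g⁻¹.det :=
    isUnit_iff_exists_inv.mpr ⟨_, Matrix.det_nonsing_inv_mul_det g hgd⟩
  have hc1 : ∀ X : Matrix (Fin n) (Fin n) ℝ, g * (g⁻¹ * X) = X := fun X => by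
    rw [← Matrix.mul_assoc, Matrix.mul_nonsing_inv g hgd, Matrix.one_mul]
  have hc2 : ∀ X : Matrix (Fin n) (Fin n) ℝ, g⁻¹ * (g * X) = X := fun X => by
    rw [← Matrix.mul_assoc, Matrix.nonsing_inv_mul g hgd, Matrix.one_mul]
  -- block relations from hO
  obtain ⟨e1, e2, e3, e4⟩ :
      O₃ᵀ * O₁ + O₁ᵀ * O₃ = 0 ∧ O₃ᵀ * O₂ + O₁ᵀ * O₄ = 1 ∧
      O₄ᵀ * O₁ + O₂ᵀ * O₃ = 1 ∧ O₄ᵀ * O₂ + O₂ᵀ * O₄ = 0 := by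
    have h := hO
    rw [Jmat, fromBlocks_transpose, fromBlocks_multiply, fromBlocks_multiply] at h
    simp only [Matrix.mul_zero, Matrix.mul_one, Matrix.zero_mul, Matrix.one_mul,
      add_zero, zero_add] at h
    exact fromBlocks_inj.mp h
  have h2' : O₃ᵀ * O₂ = 1 - O₁ᵀ * O₄ := eq_sub_of_add_eq e2
  have h4' : O₄ᵀ * O₂ = -(O₂ᵀ * O₄) := eq_neg_of_add_eq_zero_left e4
  set O : Matrix (Fin n ⊕ Fin n) (Fin n ⊕ Fin n) ℝ := fromBlocks O₁ O₂ O₃ O₄ with hOdef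
  set M : Matrix (Fin n ⊕ Fin n) (Fin n ⊕ Fin n) ℝ := Oᵀ * genMet n g B * O with hMdef
  -- J basics
  have hJJ : Jmat n * Jmat n = 1 := by
    rw [Jmat, fromBlocks_multiply]
    simp [fromBlocks_one]
  have hJdet : IsUnit (Jmat n).det :=
    isUnit_iff_exists_inv.mpr ⟨_, (by rw [← det_mul, hJJ, det_one])⟩
  have hOdet : IsUnit O.det := by
    have h := congrArg Matrix.det hO
    rw [det_mul, det_mul, det_transpose] at h
    have h' := hJdet
    rw [← h] at h'
    exact (IsUnit.mul_iff.mp h').2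
  have hOJO' : O * Jmat n * Oᵀ = Jmat n := by
    have hinv : O⁻¹ = Jmat n * Oᵀ * Jmat n := by
      apply Matrix.inv_eq_left_inv
      calc Jmat n * Oᵀ * Jmat n * O = Jmat n * (Oᵀ * Jmat n * O) := by
            simp only [Matrix.mul_assoc]
        _ = Jmat n * Jmat n := by rw [hO]
        _ = 1 := hJJ
    have h1 : O * (Jmat n * Oᵀ * Jmat n) = 1 := by
      rw [← hinv, Matrix.mul_nonsing_inv _ hOdet]
    have h2 : O * (Jmat n * Oᵀ * Jmat n) * Jmat n = Jmat n := by rw [h1, Matrix.one_mul]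
    calc O * Jmat n * Oᵀ = O * Jmat n * Oᵀ * 1 := by rw [Matrix.mul_one]
      _ = O * Jmat n * Oᵀ * (Jmat n * Jmat n) := by rw [hJJ]
      _ = O * (Jmat n * Oᵀ * Jmat n) * Jmat n := by simp only [Matrix.mul_assoc]
      _ = Jmat n := h2
  -- decomposition of the generalized metric
  set V : Matrix (Fin n ⊕ Fin n) (Fin n ⊕ Fin n) ℝ := fromBlocks 1 B 0 1 with hVdef
  set D : Matrix (Fin n ⊕ Fin n) (Fin n ⊕ Fin n) ℝ := fromBlocks g 0 0 g⁻¹ with hDdef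
  have hGdec : genMet n g B = V * D * Vᵀ := by
    rw [genMet, hVdef, hDdef, fromBlocks_transpose, fromBlocks_multiply, fromBlocks_multiply]
    simp only [transpose_one, transpose_zero, hB, Matrix.one_mul, Matrix.mul_one, Matrix.zero_mul,
      Matrix.mul_zero, add_zero, zero_add, Matrix.mul_neg, Matrix.neg_mul]
    rw [sub_eq_add_neg]
  have hDpd : D.PosDef := aux_posDef_fromBlocks hg hg.inv
  have hVTdet : IsUnit (Vᵀ).det := by
    rw [det_transpose, hVdef, Matrix.det_fromBlocks_zero₂₁]
    simp
  have hGpd : (genMet n g B).PosDef := by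
    rw [hGdec]
    have h := aux_posDef_conj hDpd hVTdet
    rwa [transpose_transpose] at h
  have hMpd : M.PosDef := aux_posDef_conj hGpd hOdet
  -- G J G = J
  have hVJV : Vᵀ * Jmat n * V = Jmat n := by
    rw [Jmat, hVdef, fromBlocks_transpose, fromBlocks_multiply, fromBlocks_multiply]
    simp [hB]
  have hVJV' : V * Jmat n * Vᵀ = Jmat n := by
    rw [Jmat, hVdef, fromBlocks_transpose, fromBlocks_multiply, fromBlocks_multiply]
    simp [hB]
  have hDJD : D * Jmat n * D = Jmat n := by
    rw [Jmat, hDdef, fromBlocks_multiply, fromBlocks_multiply]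
    simp [Matrix.mul_nonsing_inv g hgd, Matrix.nonsing_inv_mul g hgd]
  have sandV : ∀ X, Vᵀ * (Jmat n * (V * X)) = Jmat n * X := fun X => by
    rw [← Matrix.mul_assoc, ← Matrix.mul_assoc, hVJV]
  have sandD : ∀ X, D * (Jmat n * (D * X)) = Jmat n * X := fun X => by
    rw [← Matrix.mul_assoc, ← Matrix.mul_assoc, hDJD]
  have hGJG : genMet n g B * Jmat n * genMet n g B = Jmat n := by
    rw [hGdec]
    calc V * D * Vᵀ * Jmat n * (V * D * Vᵀ)
        = V * (D * (Vᵀ * (Jmat n * (V * (D * Vᵀ))))) := by simp only [Matrix.mul_assoc]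
      _ = V * (D * (Jmat n * (D * Vᵀ))) := by rw [sandV]
      _ = V * (Jmat n * Vᵀ) := by rw [sandD]
      _ = Jmat n := by rw [← Matrix.mul_assoc, hVJV']
  have sandO : ∀ X, O * (Jmat n * (Oᵀ * X)) = Jmat n * X := fun X => by
    rw [← Matrix.mul_assoc, ← Matrix.mul_assoc, hOJO']
  have sandG : ∀ X, genMet n g B * (Jmat n * (genMet n g B * X)) = Jmat n * X := fun X => by
    rw [← Matrix.mul_assoc, ← Matrix.mul_assoc, hGJG]
  have hMJM : M * Jmat n * M = Jmat n := by
    rw [hMdef]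
    calc Oᵀ * genMet n g B * O * Jmat n * (Oᵀ * genMet n g B * O)
        = Oᵀ * (genMet n g B * (O * (Jmat n * (Oᵀ * (genMet n g B * O))))) := by
          simp only [Matrix.mul_assoc]
      _ = Oᵀ * (genMet n g B * (Jmat n * (genMet n g B * O))) := by rw [sandO]
      _ = Oᵀ * (Jmat n * O) := by rw [sandG]
      _ = Jmat n := by rw [← Matrix.mul_assoc, hO]
  -- key block identities
  have hSp : M.toBlocks₂₂ = (O₄ᵀ + O₂ᵀ * (g + B)) * g⁻¹ * (O₄ᵀ + O₂ᵀ * (g + B))ᵀ := by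
    rw [hMdef, hOdef, genMet, fromBlocks_transpose, fromBlocks_multiply, fromBlocks_multiply,
      toBlocks_fromBlocks₂₂]
    simp only [transpose_add, transpose_mul, transpose_transpose, hB, hgT]
    simp only [Matrix.add_mul, Matrix.mul_add, Matrix.sub_mul, Matrix.mul_sub,
      Matrix.neg_mul, Matrix.mul_neg, Matrix.mul_assoc]
    simp only [hc1, hc2, h4']
    abel
  have hSm : M.toBlocks₂₂ = (O₄ᵀ - O₂ᵀ * (g + B)ᵀ) * g⁻¹ * (O₄ᵀ - O₂ᵀ * (g + B)ᵀ)ᵀ := by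
    rw [hMdef, hOdef, genMet, fromBlocks_transpose, fromBlocks_multiply, fromBlocks_multiply,
      toBlocks_fromBlocks₂₂]
    simp only [transpose_add, transpose_sub, transpose_neg, transpose_mul, transpose_transpose, hB, hgT, neg_neg]
    simp only [Matrix.add_mul, Matrix.mul_add, Matrix.sub_mul, Matrix.mul_sub,
      Matrix.neg_mul, Matrix.mul_neg, Matrix.mul_assoc]
    simp only [hc1, hc2, h4']
    abel
  have hQ1 : (O₃ᵀ + O₁ᵀ * (g + B)) * g⁻¹ * (O₄ᵀ + O₂ᵀ * (g + B))ᵀ = 1 + M.toBlocks₁₂ := by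
    rw [hMdef, hOdef, genMet, fromBlocks_transpose, fromBlocks_multiply, fromBlocks_multiply,
      toBlocks_fromBlocks₁₂]
    simp only [transpose_add, transpose_mul, transpose_transpose, hB, hgT]
    simp only [Matrix.add_mul, Matrix.mul_add, Matrix.sub_mul, Matrix.mul_sub,
      Matrix.neg_mul, Matrix.mul_neg, Matrix.mul_assoc]
    simp only [hc1, hc2, h2']
    abel
  -- blocks of M
  have hMT : Mᵀ = M := by
    have h := hMpd.1.eq; rwa [conjTranspose_eq_transpose_of_trivial] at h
  set P := M.toBlocks₁₁ with hPdef
  set Q := M.toBlocks₁₂ with hQdef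
  set R := M.toBlocks₂₁ with hRdef
  set S := M.toBlocks₂₂ with hSdef
  have hMblk : M = fromBlocks P Q R S := (fromBlocks_toBlocks M).symm
  obtain ⟨hPT, hRT, hQT, hST⟩ :
      Pᵀ = P ∧ Rᵀ = Q ∧ Qᵀ = R ∧ Sᵀ = S := by
    have h : (fromBlocks P Q R S)ᵀ = fromBlocks P Q R S := by rw [← hMblk]; exact hMT
    rw [fromBlocks_transpose] at h
    exact fromBlocks_inj.mp h
  have hRQ : R = Qᵀ := hQT.symm
  obtain ⟨j1, j2, j3, j4⟩ :
      Q * P + P * R = 0 ∧ Q * Q + P * S = 1 ∧ S * P + R * R = 1 ∧ S * Q + R * S = 0 := by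
    have h := hMJM
    rw [hMblk, Jmat, fromBlocks_multiply, fromBlocks_multiply] at h
    simp only [Matrix.mul_zero, Matrix.mul_one, Matrix.zero_mul, Matrix.one_mul,
      add_zero, zero_add] at h
    exact fromBlocks_inj.mp h
  have hSpd : S.PosDef := aux_posDef_toBlocks₂₂ hMpd
  have hSdet : IsUnit S.det := isUnit_iff_ne_zero.mpr hSpd.det_pos.ne'
  have hSQ : S * Q = -(Qᵀ * S) := by
    have h := j4
    rw [hRQ] at h
    exact eq_neg_of_add_eq_zero_left h
  have hPS : P * S = 1 - Q * Q := eq_sub_of_add_eq' j2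
  -- invertibility of Φ±
  have hPhidet : IsUnit (O₄ᵀ + O₂ᵀ * (g + B)).det := by
    have h := hSdet
    rw [hSp, det_mul, det_mul] at h
    exact (IsUnit.mul_iff.mp (IsUnit.mul_iff.mp h).1).1
  have hPhimdet : IsUnit (O₄ᵀ - O₂ᵀ * (g + B)ᵀ).det := by
    have h := hSdet
    rw [hSm, det_mul, det_mul] at h
    exact (IsUnit.mul_iff.mp (IsUnit.mul_iff.mp h).1).1
  have hPhiUnit : IsUnit (O₄ᵀ + O₂ᵀ * (g + B)) := (Matrix.isUnit_iff_isUnit_det _).mpr hPhidet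
  have hPhimUnit : IsUnit (O₄ᵀ - O₂ᵀ * (g + B)ᵀ) := (Matrix.isUnit_iff_isUnit_det _).mpr hPhimdet
  -- extraction
  have extract : ∀ g' B' : Matrix (Fin n) (Fin n) ℝ, g'.PosDef →
      M = genMet n g' B' → g'⁻¹ = S ∧ g' = S⁻¹ ∧ B' = Q * S⁻¹ := by
    intro g' B' hg' h
    have h' : genMet n g' B' = fromBlocks P Q R S := by rw [← h, hMblk]
    rw [genMet] at h'
    obtain ⟨k11, k12, k21, k22⟩ := fromBlocks_inj.mp h'
    have hg'det : IsUnit g'.det := isUnit_iff_ne_zero.mpr hg'.det_pos.ne'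
    have hgg : g' = S⁻¹ := by rw [← k22, Matrix.nonsing_inv_nonsing_inv g' hg'det]
    refine ⟨k22, hgg, ?_⟩
    calc B' = B' * g'⁻¹ * g' := (Matrix.nonsing_inv_mul_cancel_right g' B' hg'det).symm
      _ = Q * g' := by rw [k12]
      _ = Q * S⁻¹ := by rw [hgg]
  -- M is a generalized metric
  have hgen : M = genMet n S⁻¹ (Q * S⁻¹) := by
    rw [hMblk, genMet, Matrix.nonsing_inv_nonsing_inv S hSdet]
    symm
    refine fromBlocks_inj.mpr ⟨?_, ?_, ?_, rfl⟩
    · rw [Matrix.nonsing_inv_mul_cancel_right S Q hSdet, ← Matrix.mul_assoc]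
      calc S⁻¹ - Q * Q * S⁻¹ = (1 - Q * Q) * S⁻¹ := by rw [Matrix.sub_mul, Matrix.one_mul]
        _ = P * S * S⁻¹ := by rw [← hPS]
        _ = P := Matrix.mul_nonsing_inv_cancel_right S P hSdet
    · exact Matrix.nonsing_inv_mul_cancel_right S Q hSdet
    · rw [hRQ, ← Matrix.mul_assoc, hSQ, Matrix.neg_mul,
        Matrix.mul_nonsing_inv_cancel_right S Qᵀ hSdet, neg_neg]
  -- skewness of Q * S⁻¹
  have h1 : Qᵀ * S = -(S * Q) := by rw [hSQ, neg_neg]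
  have hskew : (Q * S⁻¹)ᵀ = -(Q * S⁻¹) := by
    rw [transpose_mul, Matrix.transpose_nonsing_inv, hST]
    calc S⁻¹ * Qᵀ = S⁻¹ * (Qᵀ * S * S⁻¹) := by
          rw [Matrix.mul_nonsing_inv_cancel_right S Qᵀ hSdet]
      _ = S⁻¹ * (-(S * Q) * S⁻¹) := by rw [h1]
      _ = -(S⁻¹ * (S * (Q * S⁻¹))) := by
          rw [Matrix.neg_mul, Matrix.mul_neg, Matrix.mul_assoc]
      _ = -(Q * S⁻¹) := by rw [Matrix.nonsing_inv_mul_cancel_left S (Q * S⁻¹) hSdet]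
  refine ⟨⟨(S⁻¹, Q * S⁻¹), ⟨hSpd.inv, hskew, hgen⟩, ?_⟩, hPhiUnit, hPhimUnit, ?_⟩
  · rintro ⟨g₁, B₁⟩ ⟨pd₁, sk₁, heq⟩
    obtain ⟨_, hgg, hbb⟩ := extract g₁ B₁ pd₁ heq
    exact Prod.ext hgg hbb
  · intro g' B' pd' sk' heq
    obtain ⟨hginv, hgg, hbb⟩ := extract g' B' pd' heq
    refine ⟨by rw [hginv, hSp], by rw [hginv, hSm], ?_⟩
    rw [hgg, hbb]
    have hPhiTdet : IsUnit ((O₄ᵀ + O₂ᵀ * (g + B))ᵀ).det := by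
      rw [det_transpose]; exact hPhidet
    have hSinv : S⁻¹ = ((O₄ᵀ + O₂ᵀ * (g + B))ᵀ)⁻¹ * (g * (O₄ᵀ + O₂ᵀ * (g + B))⁻¹) := by
      rw [hSp, Matrix.mul_inv_rev, Matrix.mul_inv_rev, Matrix.nonsing_inv_nonsing_inv g hgd]
    calc S⁻¹ + Q * S⁻¹ = (1 + Q) * S⁻¹ := by rw [Matrix.add_mul, Matrix.one_mul]
      _ = (O₃ᵀ + O₁ᵀ * (g + B)) * g⁻¹ * (O₄ᵀ + O₂ᵀ * (g + B))ᵀ * S⁻¹ := by rw [hQ1]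
      _ = (O₃ᵀ + O₁ᵀ * (g + B)) * (g⁻¹ * ((O₄ᵀ + O₂ᵀ * (g + B))ᵀ * S⁻¹)) := by
          simp only [Matrix.mul_assoc]
      _ = (O₃ᵀ + O₁ᵀ * (g + B)) * (O₄ᵀ + O₂ᵀ * (g + B))⁻¹ := by
          rw [hSinv, Matrix.mul_nonsing_inv_cancel_left _ _ hPhiTdet, hc2]
end

section
/- Let g be a real symmetric positive definite n×n matrix and B, θ real skew-symmetric n×n matrices. Let e^θ := [[1,θ],[0,1]] (block form). Then there exist a unique symmetric positive definite n×n matrix g' and a unique skew-symmetric n×n matrix B' such that (e^θ)ᵀ·𝐆(g,B)·e^θ = 𝐆(g',B'), and these satisfy the open-closed relation (g + B)⁻¹ = (g' + B')⁻¹ + θ (both g+B and g'+B' being invertible). Thus the Seiberg–Witten open-closed string relations are realized as an O(n,n) transformation of the generalized metric. -/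
open Matrix

lemma auxHerm {n : ℕ} (M : Matrix (Fin n) (Fin n) ℝ) : Mᴴ = Mᵀ := by
  ext i j; simp [conjTranspose_apply]

lemma auxIsUnit {n : ℕ} {M : Matrix (Fin n) (Fin n) ℝ} (h : (M + Mᵀ).PosDef) : IsUnit M := by
  rw [Matrix.isUnit_iff_isUnit_det, isUnit_iff_ne_zero]
  intro hdet
  obtain ⟨v, hv, hMv⟩ := (Matrix.exists_mulVec_eq_zero_iff).mpr hdet
  have := h.dotProduct_mulVec_pos hv
  rw [add_mulVec, dotProduct_add, hMv, dotProduct_zero, zero_add, star_trivial,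
    dotProduct_mulVec, vecMul_transpose, hMv, zero_dotProduct] at this
  exact lt_irrefl 0 this

lemma auxConj {n : ℕ} {M A : Matrix (Fin n) (Fin n) ℝ} (hM : M.PosDef) (hA : IsUnit A) :
    (Aᵀ * M * A).PosDef := by
  refine Matrix.PosDef.of_dotProduct_mulVec_pos ?_ ?_
  · have hH : Mᴴ = M := hM.isHermitian
    show (Aᵀ * M * A)ᴴ = _
    rw [conjTranspose_mul, conjTranspose_mul, hH, auxHerm, auxHerm, transpose_transpose,
      Matrix.mul_assoc]
  · intro x hx
    have hAx : A *ᵥ x ≠ 0 := by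
      intro h0
      exact hx (Matrix.mulVec_injective_iff_isUnit.mpr hA (by rw [h0, mulVec_zero]))
    have := hM.dotProduct_mulVec_pos hAx
    rw [star_trivial] at this ⊢
    rw [Matrix.mul_assoc, ← mulVec_mulVec, dotProduct_mulVec, vecMul_transpose,
      ← mulVec_mulVec]
    exact this

lemma auxSmul {n : ℕ} {M : Matrix (Fin n) (Fin n) ℝ} (hM : M.PosDef) {c : ℝ} (hc : 0 < c) :
    (c • M).PosDef := by
  refine Matrix.PosDef.of_dotProduct_mulVec_pos ?_ ?_
  · have hH : Mᴴ = M := hM.isHermitian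
    show (c • M)ᴴ = _
    rw [conjTranspose_smul, hH]; simp
  · intro x hx
    rw [star_trivial, smul_mulVec, dotProduct_smul, smul_eq_mul]
    exact mul_pos hc (by simpa using hM.dotProduct_mulVec_pos hx)

/-- **Open-closed relations as an `O(n,n)` transformation.** For `g` symmetric
positive definite and `B`, `θ` skew-symmetric, there is a unique pair
`(g',B')` of a symmetric positive definite and a skew-symmetric matrix with
`(e^θ)ᵀ 𝐆(g,B) e^θ = 𝐆(g',B')` where `e^θ = [[1,θ],[0,1]]`, and then both
`g + B` and `g' + B'` are invertible with
`(g+B)⁻¹ = (g'+B')⁻¹ + θ` (the Seiberg–Witten open-closed relations). -/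
theorem stmt_12 (n : ℕ) (g B θ : Matrix (Fin n) (Fin n) ℝ)
    (hg : g.PosDef) (hB : Bᵀ = -B) (hθ : θᵀ = -θ) :
    (∃! p : Matrix (Fin n) (Fin n) ℝ × Matrix (Fin n) (Fin n) ℝ,
      p.1.PosDef ∧ p.2ᵀ = -p.2 ∧
      (fromBlocks 1 θ 0 1)ᵀ * genMet n g B * fromBlocks 1 θ 0 1 =
        genMet n p.1 p.2) ∧
    ∀ g' B' : Matrix (Fin n) (Fin n) ℝ, g'.PosDef → B'ᵀ = -B' →
      (fromBlocks 1 θ 0 1)ᵀ * genMet n g B * fromBlocks 1 θ 0 1 =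
        genMet n g' B' →
      IsUnit (g + B) ∧ IsUnit (g' + B') ∧ (g + B)⁻¹ = (g' + B')⁻¹ + θ := by
  have htg : gᵀ = g := by rw [← auxHerm]; exact hg.isHermitian
  -- invertibility of g
  have hgU : IsUnit g := hg.isUnit
  have hgd : IsUnit g.det := (Matrix.isUnit_iff_isUnit_det g).mp hgU
  have hgu1 : g * g⁻¹ = 1 := Matrix.mul_nonsing_inv g hgd
  have hgu2 : g⁻¹ * g = 1 := Matrix.nonsing_inv_mul g hgd
  have htgi : (g⁻¹)ᵀ = g⁻¹ := by rw [Matrix.transpose_nonsing_inv, htg]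
  set E := g + B with hEdef
  have hEt : Eᵀ = g - B := by rw [hEdef, transpose_add, htg, hB, sub_eq_add_neg]
  have hEU : IsUnit E := by
    apply auxIsUnit
    have : E + Eᵀ = g + g := by rw [hEt, hEdef]; abel
    rw [this]; exact hg.add hg
  have hEd : IsUnit E.det := (Matrix.isUnit_iff_isUnit_det E).mp hEU
  have hEu1 : E * E⁻¹ = 1 := Matrix.mul_nonsing_inv E hEd
  have hEu2 : E⁻¹ * E = 1 := Matrix.nonsing_inv_mul E hEd
  have hEtd : IsUnit (Eᵀ).det := by rwa [Matrix.det_transpose]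
  have hEtu1 : Eᵀ * (Eᵀ)⁻¹ = 1 := Matrix.mul_nonsing_inv _ hEtd
  have hEtu2 : (Eᵀ)⁻¹ * Eᵀ = 1 := Matrix.nonsing_inv_mul _ hEtd
  set F := E⁻¹ - θ with hFdef
  have hFt : Fᵀ = (Eᵀ)⁻¹ + θ := by
    rw [hFdef, transpose_sub, Matrix.transpose_nonsing_inv, hθ, sub_neg_eq_add]
  have hFsum : F + Fᵀ = E⁻¹ + (Eᵀ)⁻¹ := by rw [hFt, hFdef]; abel
  have hgg : g + g = E + Eᵀ := by rw [hEt, hEdef]; abel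
  have hFsum2 : F + Fᵀ = E⁻¹ * (g + g) * (Eᵀ)⁻¹ := by
    rw [hgg, Matrix.mul_add, Matrix.add_mul, hEu2, Matrix.mul_assoc, hEtu1,
      Matrix.one_mul, Matrix.mul_one, hFsum]
    abel
  have hFP : (F + Fᵀ).PosDef := by
    have h2 : g + g = E + Eᵀ := by rw [hEt, hEdef]; abel
    have h3 : E⁻¹ * (E + Eᵀ) * (Eᵀ)⁻¹ = E⁻¹ + (Eᵀ)⁻¹ := by
      rw [Matrix.mul_add, Matrix.add_mul, hEu2, Matrix.mul_assoc, hEtu1,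
        Matrix.one_mul, Matrix.mul_one]
      abel
    have h1 : F + Fᵀ = ((Eᵀ)⁻¹)ᵀ * (g + g) * (Eᵀ)⁻¹ := by
      rw [Matrix.transpose_nonsing_inv, transpose_transpose, h2, hFsum, h3]
    rw [h1]
    refine auxConj (hg.add hg) ?_
    rw [Matrix.isUnit_nonsing_inv_iff, Matrix.isUnit_iff_isUnit_det]
    exact hEtd
  have hFU : IsUnit F := auxIsUnit hFP
  have hFd : IsUnit F.det := (Matrix.isUnit_iff_isUnit_det F).mp hFU
  have hFu1 : F * F⁻¹ = 1 := Matrix.mul_nonsing_inv F hFd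
  have hFu2 : F⁻¹ * F = 1 := Matrix.nonsing_inv_mul F hFd
  set E₂ := F⁻¹ with hE₂def
  have hE₂U : IsUnit E₂ := (Matrix.isUnit_nonsing_inv_iff).mpr hFU
  have hE₂inv : E₂⁻¹ = F := Matrix.nonsing_inv_nonsing_inv F hFd
  have hFtE₂ : Fᵀ * E₂ᵀ = 1 := by rw [← Matrix.transpose_mul, hFu2, transpose_one]
  have hE₂tFt : E₂ᵀ * Fᵀ = 1 := by rw [← Matrix.transpose_mul, hFu1, transpose_one]
  have hE₂tU : IsUnit E₂ᵀ := by
    rw [Matrix.isUnit_iff_isUnit_det, Matrix.det_transpose,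
      ← Matrix.isUnit_iff_isUnit_det]
    exact hE₂U
  set g₂ := (2⁻¹ : ℝ) • (E₂ + E₂ᵀ) with hg₂def
  set B₂ := (2⁻¹ : ℝ) • (E₂ - E₂ᵀ) with hB₂def
  have hsum : g₂ + B₂ = E₂ := by rw [hg₂def, hB₂def]; module
  have hB₂t : B₂ᵀ = -B₂ := by
    rw [hB₂def, transpose_smul, transpose_sub, transpose_transpose]; module
  have hg₂t : g₂ᵀ = g₂ := by
    rw [hg₂def, transpose_smul, transpose_add, transpose_transpose]; module
  have hdiff : g₂ - B₂ = E₂ᵀ := by rw [hg₂def, hB₂def]; module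
  have hE₂sum : E₂ + E₂ᵀ = E₂ * (F + Fᵀ) * E₂ᵀ := by
    rw [Matrix.mul_add, Matrix.add_mul, hFu2, Matrix.mul_assoc, hFtE₂,
      Matrix.one_mul, Matrix.mul_one]
    abel
  have hg₂P : g₂.PosDef := by
    have h4 := auxConj hFP hE₂tU
    rw [transpose_transpose, ← hE₂sum] at h4
    rw [hg₂def]
    exact auxSmul h4 (by norm_num)
  -- cancellation helpers
  have cancel : ∀ (A C : Matrix (Fin n) (Fin n) ℝ), A * C = 1 →
      ∀ X : Matrix (Fin n) (Fin n) ℝ, A * (C * X) = X := by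
    intro A C h X; rw [← Matrix.mul_assoc, h, Matrix.one_mul]
  have cg := cancel g g⁻¹ hgu1
  have cgi := cancel g⁻¹ g hgu2
  have cE := cancel E E⁻¹ hEu1
  have cEi := cancel E⁻¹ E hEu2
  have cEt := cancel Eᵀ (Eᵀ)⁻¹ hEtu1
  have cEti := cancel (Eᵀ)⁻¹ Eᵀ hEtu2
  have cF := cancel F E₂ hFu1
  have cFi := cancel E₂ F hFu2
  have cE₂tFt := cancel E₂ᵀ Fᵀ hE₂tFt
  have cFtE₂t := cancel Fᵀ E₂ᵀ hFtE₂
  have hg₂rep : g₂ = (2⁻¹ : ℝ) • (E₂ * (E⁻¹ * (g + g) * (Eᵀ)⁻¹) * E₂ᵀ) := by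
    rw [hg₂def, hE₂sum, hFsum2]
  have htwo : (2⁻¹ : ℝ) • ((1 : Matrix (Fin n) (Fin n) ℝ) + 1) = 1 := by
    rw [← two_smul ℝ (1 : Matrix (Fin n) (Fin n) ℝ), smul_smul]
    norm_num
  have hkey : g₂ * (Fᵀ * (Eᵀ * g⁻¹ * E) * F) = 1 := by
    rw [hg₂rep, smul_mul_assoc]
    have h5 : (E₂ * (E⁻¹ * (g + g) * (Eᵀ)⁻¹) * E₂ᵀ) * (Fᵀ * (Eᵀ * g⁻¹ * E) * F)
        = 1 + 1 := by
      simp only [Matrix.mul_assoc, Matrix.mul_add, Matrix.add_mul, cE₂tFt, cEti,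
        cg, cgi, cE, cEi, cF, cFi, cEt, cFtE₂t, hFu1, hFu2, hEu1, hEu2, hEtu1,
        hEtu2, hgu1, hgu2, hE₂tFt, hFtE₂, Matrix.mul_one, Matrix.one_mul]
    rw [h5, htwo]
  have hg₂i : g₂⁻¹ = Fᵀ * (Eᵀ * g⁻¹ * E) * F := Matrix.inv_eq_right_inv hkey
  have hg₂d : IsUnit g₂.det := (Matrix.isUnit_iff_isUnit_det g₂).mp hg₂P.isUnit
  have hg₂u1 : g₂ * g₂⁻¹ = 1 := Matrix.mul_nonsing_inv g₂ hg₂d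
  have hg₂u2 : g₂⁻¹ * g₂ = 1 := Matrix.nonsing_inv_mul g₂ hg₂d
  have cg₂ := cancel g₂ g₂⁻¹ hg₂u1
  have cg₂i := cancel g₂⁻¹ g₂ hg₂u2
  -- facts used for block 12
  have hgiE : g⁻¹ * E = 1 + g⁻¹ * B := by rw [hEdef, Matrix.mul_add, hgu2]
  have hEgi : E * g⁻¹ = 1 + B * g⁻¹ := by rw [hEdef, Matrix.add_mul, hgu1]
  have hEtgi : Eᵀ * g⁻¹ = 1 - B * g⁻¹ := by rw [hEt, Matrix.sub_mul, hgu1]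
  have hgiEt : g⁻¹ * Eᵀ = 1 - g⁻¹ * B := by rw [hEt, Matrix.mul_sub, hgu2]
  have hP : Eᵀ * g⁻¹ * E = g - B * g⁻¹ * B := by
    rw [hEtgi, Matrix.sub_mul, Matrix.one_mul, Matrix.mul_assoc B g⁻¹ E, hgiE,
      Matrix.mul_add, Matrix.mul_one, ← Matrix.mul_assoc, hEdef]
    abel
  have hP2 : E * g⁻¹ * Eᵀ = g - B * g⁻¹ * B := by
    rw [hEgi, Matrix.add_mul, Matrix.one_mul, Matrix.mul_assoc B g⁻¹ Eᵀ, hgiEt,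
      Matrix.mul_sub, Matrix.mul_one, ← Matrix.mul_assoc, hEt]
    abel
  have hEiB : E⁻¹ * (B * g⁻¹) = g⁻¹ - E⁻¹ := by
    have hb : B * g⁻¹ = E * g⁻¹ - 1 := by rw [hEgi]; abel
    rw [hb, Matrix.mul_sub, Matrix.mul_one, ← Matrix.mul_assoc, hEu2, Matrix.one_mul]
  have htg₂i : (g₂⁻¹)ᵀ = g₂⁻¹ := by rw [Matrix.transpose_nonsing_inv, hg₂t]
  have hK : F * ((g - B * g⁻¹ * B) * θ + B * g⁻¹) = g₂⁻¹ - F := by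
    rw [hg₂i]
    conv_lhs => rw [← hP2]
    rw [hFt, hFdef]
    simp only [Matrix.mul_add, Matrix.add_mul, Matrix.mul_sub, Matrix.sub_mul,
      Matrix.mul_assoc, cEti, cEi, cE, cEt, hEu1, hEu2, hEtu1, hEtu2, hEiB,
      Matrix.mul_one, Matrix.one_mul, Matrix.neg_mul, Matrix.mul_neg, neg_neg]
    simp only [hEt, hEdef, transpose_add, htg, hB, Matrix.mul_add, Matrix.add_mul, Matrix.mul_sub,
      Matrix.sub_mul, Matrix.mul_assoc, cg, cgi, hgu1, hgu2, Matrix.mul_one,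
      Matrix.one_mul, Matrix.neg_mul, Matrix.mul_neg, neg_neg]
    abel
  have hK2 : g₂⁻¹ = F * ((g - B * g⁻¹ * B) * θ + B * g⁻¹) + F := by rw [hK]; abel
  have hB₂E : B₂ = E₂ - g₂ := by rw [← hsum]; abel
  have hEg₂ : E₂ * g₂⁻¹ = ((g - B * g⁻¹ * B) * θ + B * g⁻¹) + 1 := by
    rw [hK2, Matrix.mul_add, cFi, hFu2]
  have h12 : (g - B * g⁻¹ * B) * θ + B * g⁻¹ = B₂ * g₂⁻¹ := by
    rw [hB₂E, Matrix.sub_mul E₂ g₂ g₂⁻¹, hEg₂, hg₂u1]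
    abel
  have heq : (fromBlocks 1 θ 0 1)ᵀ * genMet n g B * fromBlocks 1 θ 0 1 =
      genMet n g₂ B₂ := by
    rw [genMet, genMet, fromBlocks_transpose, transpose_one, transpose_zero, hθ,
      fromBlocks_multiply, fromBlocks_multiply]
    rw [Matrix.fromBlocks_inj]
    refine ⟨?_, ?_, ?_, ?_⟩
    · -- block 11
      simp only [Matrix.one_mul, Matrix.mul_one, Matrix.zero_mul, Matrix.mul_zero,
        add_zero, zero_add]
      have h11a : g₂ - B₂ * g₂⁻¹ * B₂ = E₂ᵀ * g₂⁻¹ * E₂ := by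
        rw [← hdiff, ← hsum]
        simp only [Matrix.sub_mul, Matrix.mul_add, Matrix.add_mul, Matrix.mul_assoc,
          hg₂u1, hg₂u2, cg₂, cg₂i, Matrix.one_mul, Matrix.mul_one]
        abel
      have h11b : E₂ᵀ * g₂⁻¹ * E₂ = Eᵀ * g⁻¹ * E := by
        rw [hg₂i]
        simp only [Matrix.mul_assoc, cE₂tFt, hFu1, Matrix.mul_one]
      rw [h11a, h11b, hP]
    · -- block 12
      simp only [Matrix.one_mul, Matrix.mul_one, Matrix.zero_mul, Matrix.mul_zero,
        add_zero, zero_add]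
      rw [hB₂E, Matrix.sub_mul E₂ g₂ g₂⁻¹, hEg₂, hg₂u1]
      abel
    · -- block 21
      simp only [Matrix.one_mul, Matrix.mul_one, Matrix.zero_mul, Matrix.mul_zero,
        add_zero, zero_add]
      have h21 := congrArg Matrix.transpose h12
      simp only [transpose_add, transpose_sub, Matrix.transpose_mul, transpose_neg,
        hθ, hB, htg, htgi, htg₂i, hB₂t, Matrix.neg_mul, Matrix.mul_neg, neg_neg] at h21 ⊢
      simp only [Matrix.mul_sub, Matrix.sub_mul, Matrix.mul_add, Matrix.add_mul,
        Matrix.mul_assoc, Matrix.neg_mul, Matrix.mul_neg, neg_neg] at h21 ⊢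
      abel_nf at h21 ⊢
      exact h21
    · -- block 22
      simp only [Matrix.one_mul, Matrix.mul_one, Matrix.zero_mul, Matrix.mul_zero,
        add_zero, zero_add]
      rw [hg₂i, hFt, hFdef]
      simp only [Matrix.mul_add, Matrix.add_mul, Matrix.mul_sub, Matrix.sub_mul,
        Matrix.mul_assoc, cEti, cEi, cE, cEt, hEu1, hEu2, hEtu1, hEtu2,
        Matrix.mul_one, Matrix.one_mul, Matrix.neg_mul, Matrix.mul_neg, neg_neg]
      simp only [hEt, hEdef, transpose_add, htg, hB, Matrix.mul_add, Matrix.add_mul, Matrix.mul_sub,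
        Matrix.sub_mul, Matrix.mul_assoc, cg, cgi, hgu1, hgu2, Matrix.mul_one,
        Matrix.one_mul, Matrix.neg_mul, Matrix.mul_neg, neg_neg]
      abel
  have huniq : ∀ g₁ B₁ : Matrix (Fin n) (Fin n) ℝ, g₁.PosDef → B₁ᵀ = -B₁ →
      (fromBlocks 1 θ 0 1)ᵀ * genMet n g B * fromBlocks 1 θ 0 1 = genMet n g₁ B₁ →
      g₁ = g₂ ∧ B₁ = B₂ := by
    intro g₁ B₁ hP1 _ heq1
    have h2' : genMet n g₁ B₁ = genMet n g₂ B₂ := by rw [← heq1, heq]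
    rw [genMet, genMet, Matrix.fromBlocks_inj] at h2'
    obtain ⟨e11, e12, e21, e22⟩ := h2'
    have hg1d : IsUnit g₁.det := (Matrix.isUnit_iff_isUnit_det g₁).mp hP1.isUnit
    have hgg₂ : g₁ = g₂ := by
      rw [← Matrix.nonsing_inv_nonsing_inv g₁ hg1d, e22,
        Matrix.nonsing_inv_nonsing_inv g₂ hg₂d]
    refine ⟨hgg₂, ?_⟩
    have h5 : B₁ * g₁⁻¹ * g₁ = B₂ * g₂⁻¹ * g₁ := by rw [e12]
    rwa [Matrix.mul_assoc, Matrix.nonsing_inv_mul g₁ hg1d, Matrix.mul_one, hgg₂,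
      Matrix.mul_assoc, hg₂u2, Matrix.mul_one] at h5
  constructor
  · refine ⟨(g₂, B₂), ⟨hg₂P, hB₂t, heq⟩, ?_⟩
    rintro ⟨g₁, B₁⟩ ⟨h1, h2, h3⟩
    obtain ⟨e1, e2⟩ := huniq g₁ B₁ h1 h2 h3
    exact Prod.ext e1 e2
  · intro g₁ B₁ h1 h2 h3
    obtain ⟨e1, e2⟩ := huniq g₁ B₁ h1 h2 h3
    refine ⟨hEU, ?_, ?_⟩
    · rw [e1, e2, hsum]; exact hE₂U
    · rw [e1, e2, hsum, hE₂inv, hFdef]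
      abel
end

section
/- Let g be a real symmetric positive definite n×n matrix and B a real skew-symmetric n×n matrix. Then det(g + B) > 0; in particular, g + B is invertible. -/
open Matrix

lemma skew_quad_zero {n : ℕ} (B : Matrix (Fin n) (Fin n) ℝ) (hB : Bᵀ = -B)
    (v : Fin n → ℝ) : v ⬝ᵥ (B *ᵥ v) = 0 := by
  have h : v ⬝ᵥ (B *ᵥ v) = -(v ⬝ᵥ (B *ᵥ v)) := by
    calc v ⬝ᵥ (B *ᵥ v) = (Bᵀ *ᵥ v) ⬝ᵥ v := by
          rw [Matrix.mulVec_transpose, Matrix.dotProduct_mulVec]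
      _ = -(v ⬝ᵥ (B *ᵥ v)) := by
          rw [hB, Matrix.neg_mulVec, neg_dotProduct, dotProduct_comm]
  linarith

lemma det_ne_zero_aux {n : ℕ} (g B : Matrix (Fin n) (Fin n) ℝ)
    (hg : g.PosDef) (hB : Bᵀ = -B) (t : ℝ) : (g + t • B).det ≠ 0 := by
  intro h
  rw [← Matrix.exists_mulVec_eq_zero_iff] at h
  obtain ⟨v, hv, hmv⟩ := h
  have h1 : v ⬝ᵥ ((g + t • B) *ᵥ v) = 0 := by rw [hmv]; simp
  rw [Matrix.add_mulVec, dotProduct_add, Matrix.smul_mulVec,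
    dotProduct_smul, skew_quad_zero B hB v] at h1
  have h2 := hg.dotProduct_mulVec_pos hv
  simp only [star_trivial] at h2
  simp at h1
  linarith

/-- For `g` symmetric positive definite and `B` skew-symmetric,
`det(g + B) > 0`; in particular `g + B` is invertible. -/
theorem stmt_14 {n : ℕ} (g B : Matrix (Fin n) (Fin n) ℝ)
    (hg : g.PosDef) (hB : Bᵀ = -B) :
    0 < (g + B).det ∧ IsUnit (g + B) := by
  have hne : ∀ t : ℝ, (g + t • B).det ≠ 0 := det_ne_zero_aux g B hg hB
  have hcont : Continuous fun t : ℝ => (g + t • B).det := by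
    apply Continuous.matrix_det
    continuity
  have h0 : 0 < (g + (0 : ℝ) • B).det := by
    simpa using hg.det_pos
  have h1 : 0 < (g + (1 : ℝ) • B).det := by
    by_contra hle
    push_neg at hle
    have hlt : (g + (1 : ℝ) • B).det < 0 := lt_of_le_of_ne hle (hne 1)
    have := intermediate_value_Icc (le_of_lt one_pos)
      (hcont.continuousOn (s := Set.Icc (0:ℝ) 1))
    -- 0 ∈ [f 1, f 0]? orientation: f 0 > 0 > f 1, use intermediate_value_Icc'
    have h' := intermediate_value_Icc' (le_of_lt one_pos)
      (hcont.continuousOn (s := Set.Icc (0:ℝ) 1))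
    have h0mem : (0 : ℝ) ∈ Set.Icc ((fun t : ℝ => (g + t • B).det) 1)
        ((fun t : ℝ => (g + t • B).det) 0) := ⟨le_of_lt hlt, le_of_lt h0⟩
    obtain ⟨t, _, ht⟩ := h' h0mem
    exact hne t ht
  rw [one_smul] at h1
  refine ⟨h1, ?_⟩
  rw [Matrix.isUnit_iff_isUnit_det, isUnit_iff_ne_zero]
  exact ne_of_gt h1
end

section
/- Let A be a real n×n matrix and let 1 ≤ p ≤ n. Define the p-th induced matrix B, indexed by the p-element subsets of {1,…,n}, by B_{I,J} := det(A_{I,J}), where A_{I,J} is the p×p submatrix of A with rows indexed by I and columns by J (each taken in increasing order). Then det(B) = (det A)^{C(n−1, p−1)}, where C(n−1,p−1) is the binomial coefficient. Moreover, A is invertible if and only if B is invertible. -/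
open Matrix

/-- The `p`-th compound (induced) matrix of an `n×n` matrix `A`: it is indexed
by the `p`-element subsets of `{1,…,n}` and its `(I,J)` entry is the minor
`det A_{I,J}` with rows `I` and columns `J` taken in increasing order. -/
noncomputable def compound (n p : ℕ) (A : Matrix (Fin n) (Fin n) ℝ) :
    Matrix {s : Finset (Fin n) // s.card = p} {s : Finset (Fin n) // s.card = p} ℝ :=
  Matrix.of fun I J =>
    (A.submatrix (fun a : Fin p => ((I.1.orderIsoOfFin I.2) a : Fin n))
      (fun b : Fin p => ((J.1.orderIsoOfFin J.2) b : Fin n))).det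

namespace SFaux

open Finset Equiv

variable {n p : ℕ}

/-- The increasing enumeration of a `p`-element subset of `Fin n`. -/
def emb (s : {s : Finset (Fin n) // s.card = p}) : Fin p → Fin n :=
  fun a => ((s.1.orderIsoOfFin s.2) a : Fin n)

lemma emb_mem (s : {s : Finset (Fin n) // s.card = p}) (a : Fin p) : emb s a ∈ s.1 :=
  ((s.1.orderIsoOfFin s.2) a).2

lemma emb_injective (s : {s : Finset (Fin n) // s.card = p}) : Function.Injective (emb s) :=
  fun _ _ h => (s.1.orderIsoOfFin s.2).injective (Subtype.ext h)

lemma exists_emb {s : {s : Finset (Fin n) // s.card = p}} {x : Fin n} (hx : x ∈ s.1) :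
    ∃ a, emb s a = x :=
  ⟨(s.1.orderIsoOfFin s.2).symm ⟨x, hx⟩, by simp [emb]⟩

lemma compound_apply (A : Matrix (Fin n) (Fin n) ℝ)
    (I J : {s : Finset (Fin n) // s.card = p}) :
    compound n p A I J = (A.submatrix (emb I) (emb J)).det := rfl

/-- The subset underlying an injective map `Fin p → Fin n`. -/
def subOf (f : Fin p → Fin n) (hf : Function.Injective f) :
    {s : Finset (Fin n) // s.card = p} :=
  ⟨Finset.univ.image f, by
    rw [Finset.card_image_of_injective _ hf, Finset.card_univ, Fintype.card_fin]⟩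

noncomputable def toPerm (f : Fin p → Fin n) (hf : Function.Injective f) : Perm (Fin p) :=
  Equiv.ofBijective
    (fun i => ((subOf f hf).1.orderIsoOfFin (subOf f hf).2).symm
      ⟨f i, Finset.mem_image_of_mem f (Finset.mem_univ i)⟩)
    (Finite.injective_iff_bijective.mp (fun a b hab => by
      have := congrArg (fun z => (((subOf f hf).1.orderIsoOfFin (subOf f hf).2) z : Fin n)) hab
      simp only [OrderIso.apply_symm_apply] at this
      exact hf this))

lemma emb_subOf (f : Fin p → Fin n) (hf : Function.Injective f) :
    emb (subOf f hf) ∘ (toPerm f hf) = f := by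
  funext i
  simp [emb, toPerm, Equiv.ofBijective]

lemma emb_comp_inj {s t : {s : Finset (Fin n) // s.card = p}} {σ τ : Perm (Fin p)}
    (h : emb s ∘ σ = emb t ∘ τ) : s = t ∧ σ = τ := by
  have hst : s = t := by
    refine Subtype.ext (Finset.ext fun x => ⟨fun hx => ?_, fun hx => ?_⟩)
    · obtain ⟨a, ha⟩ := exists_emb hx
      have := congrFun h (σ.symm a)
      simp only [Function.comp_apply, Equiv.apply_symm_apply, ha] at this
      rw [this]; exact emb_mem _ _
    · obtain ⟨a, ha⟩ := exists_emb hx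
      have := congrFun h (τ.symm a)
      simp only [Function.comp_apply, Equiv.apply_symm_apply, ha] at this
      rw [← this]; exact emb_mem _ _
  subst hst
  refine ⟨rfl, Equiv.ext fun i => emb_injective s ?_⟩
  exact congrFun h i

/-- **Cauchy–Binet formula.** -/
theorem cauchyBinet (M : Matrix (Fin p) (Fin n) ℝ) (N : Matrix (Fin n) (Fin p) ℝ) :
    det (M * N) = ∑ s : {s : Finset (Fin n) // s.card = p},
      det (M.submatrix id (emb s)) * det (N.submatrix (emb s) id) := by
  calc det (M * N)
      = ∑ f : Fin p → Fin n, ∑ σ : Perm (Fin p),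
          Perm.sign σ * ∏ i, M (σ i) (f i) * N (f i) i := by
        simp only [det_apply', mul_apply, prod_univ_sum, mul_sum, Fintype.piFinset_univ]
        rw [Finset.sum_comm]
    _ = ∑ f : Fin p → Fin n, det (M.submatrix id f) * ∏ i, N (f i) i := by
        refine Finset.sum_congr rfl fun f _ => ?_
        rw [det_apply', Finset.sum_mul]
        refine Finset.sum_congr rfl fun σ _ => ?_
        rw [mul_assoc, ← Finset.prod_mul_distrib]
        rfl
    _ = ∑ f ∈ Finset.univ.filter (fun f : Fin p → Fin n => Function.Injective f),
          det (M.submatrix id f) * ∏ i, N (f i) i := by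
        symm
        apply Finset.sum_subset (Finset.filter_subset _ _)
        intro f _ hf
        have hinj : ¬Function.Injective f := by simpa using hf
        rw [Function.Injective] at hinj
        push_neg at hinj
        obtain ⟨a, b, hab, hne⟩ := hinj
        rw [det_zero_of_column_eq hne (fun k => by simp [hab]), zero_mul]
    _ = ∑ x : {s : Finset (Fin n) // s.card = p} × Perm (Fin p),
          det (M.submatrix id (emb x.1 ∘ x.2)) * ∏ i, N (emb x.1 (x.2 i)) i := by
        refine Finset.sum_bij'
          (fun f hf => (subOf f (by simpa using (Finset.mem_filter.mp hf).2),
                        toPerm f (by simpa using (Finset.mem_filter.mp hf).2)))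
          (fun x _ => emb x.1 ∘ x.2) (fun _ _ => Finset.mem_univ _)
          (fun x _ => Finset.mem_filter.mpr ⟨Finset.mem_univ _,
            (emb_injective x.1).comp x.2.injective⟩)
          (fun f hf => emb_subOf f _)
          (fun x hx => ?_) (fun f hf => ?_)
        · have h := emb_comp_inj (emb_subOf (emb x.1 ∘ x.2)
            ((emb_injective x.1).comp x.2.injective))
          exact Prod.ext h.1 h.2
        · have hf2 : Function.Injective f := by simpa using (Finset.mem_filter.mp hf).2
          have h2 : ∀ x, emb (subOf f hf2) (toPerm f hf2 x) = f x :=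
            fun x => congrFun (emb_subOf f hf2) x
          simp only [h2, emb_subOf f hf2]
    _ = ∑ s : {s : Finset (Fin n) // s.card = p},
          det (M.submatrix id (emb s)) * det (N.submatrix (emb s) id) := by
        rw [Fintype.sum_prod_type]
        refine Finset.sum_congr rfl fun s _ => ?_
        have h1 : ∀ σ : Perm (Fin p), M.submatrix id (emb s ∘ σ)
            = (M.submatrix id (emb s)).submatrix id σ := fun σ => by
          rw [submatrix_submatrix]; rfl
        calc (∑ σ : Perm (Fin p), det (M.submatrix id (emb s ∘ σ)) * ∏ i, N (emb s (σ i)) i)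
            = ∑ σ : Perm (Fin p), det (M.submatrix id (emb s)) *
                (Perm.sign σ * ∏ i, N (emb s (σ i)) i) := by
              refine Finset.sum_congr rfl fun σ _ => ?_
              rw [h1, det_permute']; ring
          _ = det (M.submatrix id (emb s)) * det (N.submatrix (emb s) id) := by
              rw [← Finset.mul_sum]
              congr 1
              rw [det_apply']
              rfl

theorem compound_mul (A B : Matrix (Fin n) (Fin n) ℝ) :
    compound n p (A * B) = compound n p A * compound n p B := by
  ext I J
  rw [mul_apply, compound_apply]
  have h : (A * B).submatrix (emb I) (emb J)
      = (A.submatrix (emb I) id) * (B.submatrix id (emb J)) :=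
    submatrix_mul A B (emb I) id (emb J) Function.bijective_id
  rw [h, cauchyBinet]
  exact Finset.sum_congr rfl fun K _ => rfl

/-- The compound of a diagonal matrix is diagonal. -/
theorem compound_diagonal (d : Fin n → ℝ) :
    compound n p (Matrix.diagonal d)
      = Matrix.diagonal (fun I : {s : Finset (Fin n) // s.card = p} => ∏ i ∈ I.1, d i) := by
  ext I J
  by_cases h : I = J
  · subst h
    have hd : (Matrix.diagonal d).submatrix (emb I) (emb I)
        = Matrix.diagonal (fun a => d (emb I a)) := by
      ext a b
      by_cases hab : a = b
      · subst hab; simp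
      · rw [submatrix_apply, Matrix.diagonal_apply_ne _ ((emb_injective I).ne hab),
          Matrix.diagonal_apply_ne _ hab]
    rw [compound_apply, hd, det_diagonal, Matrix.diagonal_apply_eq]
    rw [← Finset.prod_coe_sort I.1 d]
    exact Fintype.prod_equiv (I.1.orderIsoOfFin I.2).toEquiv _ _ (fun a => rfl)
  · rw [Matrix.diagonal_apply_ne _ h, compound_apply]
    have hne : ∃ x ∈ I.1, x ∉ J.1 := by
      by_contra hc
      push_neg at hc
      exact h (Subtype.ext (Finset.eq_of_subset_of_card_le hc (by rw [I.2, J.2])))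
    obtain ⟨x, hxI, hxJ⟩ := hne
    obtain ⟨a, ha⟩ := exists_emb hxI
    refine det_eq_zero_of_row_eq_zero a fun b => ?_
    rw [submatrix_apply, ha]
    exact Matrix.diagonal_apply_ne' _ (fun hxe => hxJ (hxe ▸ emb_mem J b))

theorem compound_one : compound n p (1 : Matrix (Fin n) (Fin n) ℝ) = 1 := by
  rw [← Matrix.diagonal_one, compound_diagonal]
  simp

/-- Determinant of a unipotent matrix with square-zero nilpotent part. -/
theorem det_one_add_of_sq {m : Type*} [Fintype m] [DecidableEq m]
    (E : Matrix m m ℝ) (h : E * E = 0) : det (1 + E) = 1 := by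
  classical
  have hn : IsNilpotent E := ⟨2, by rw [pow_two]; exact h⟩
  have hc : E.charpoly = Polynomial.X ^ Fintype.card m := by
    have h2 := Matrix.isNilpotent_charpoly_sub_pow_of_isNilpotent hn
    have h3 := h2.eq_zero
    exact sub_eq_zero.mp h3
  have hev := congrArg (Polynomial.eval (-1 : ℝ)) hc
  rw [Matrix.charpoly, _root_.eval_det, _root_.matPolyEquiv_eval_eq_map] at hev
  have hmap : (Matrix.charmatrix E).map (Polynomial.eval (-1 : ℝ)) = -(1 + E) := by
    ext a b
    by_cases hab : a = b
    · subst hab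
      simp [Matrix.charmatrix_apply_eq]
      ring
    · simp [Matrix.charmatrix_apply_ne _ _ _ hab, Matrix.one_apply_ne hab]
  rw [hmap] at hev
  have hneg : det (-(1 + E)) = (-1 : ℝ) ^ Fintype.card m * det (1 + E) := by
    rw [← Matrix.det_smul, neg_one_smul]
  rw [hneg, Polynomial.eval_pow, Polynomial.eval_X] at hev
  have hnz : ((-1 : ℝ) ^ Fintype.card m) ≠ 0 := pow_ne_zero _ (by norm_num)
  field_simp at hev
  linarith [hev]

theorem compound_transvection (i j : Fin n) (hij : i ≠ j) (c : ℝ) :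
    det (compound n p (Matrix.transvection i j c)) = 1 := by
  classical
  set T := Matrix.transvection i j c with hT
  have hTapp : ∀ x y, T x y = (if x = y then (1:ℝ) else 0) + (if i = x ∧ j = y then c else 0) := by
    intro x y
    simp [hT, Matrix.transvection, Matrix.one_apply, Matrix.single, Matrix.of_apply]
  -- diagonal entries are 1
  have hdiag : ∀ I, compound n p T I I = 1 := by
    intro I
    rw [compound_apply]
    by_cases hiI : i ∈ I.1
    · by_cases hjI : j ∈ I.1
      · obtain ⟨a0, ha0⟩ := exists_emb hiI
        obtain ⟨b0, hb0⟩ := exists_emb hjI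
        have hab : a0 ≠ b0 := fun hh => hij (by rw [← ha0, ← hb0, hh])
        have : T.submatrix (emb I) (emb I) = Matrix.transvection a0 b0 c := by
          ext a b
          have e1 : (emb I a = emb I b) ↔ (a = b) := (emb_injective I).eq_iff
          have e2 : (i = emb I a ∧ j = emb I b) ↔ (a0 = a ∧ b0 = b) := by
            constructor
            · rintro ⟨h1, h2⟩
              exact ⟨(emb_injective I) (by rw [ha0, ← h1]), (emb_injective I) (by rw [hb0, ← h2])⟩
            · rintro ⟨h1, h2⟩
              exact ⟨by rw [← h1, ha0], by rw [← h2, hb0]⟩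
          rw [submatrix_apply, hTapp, Matrix.transvection, Matrix.add_apply,
            Matrix.one_apply, Matrix.single]
          simp only [Matrix.of_apply]
          rw [if_congr e1 rfl rfl, if_congr e2 rfl rfl]
        rw [this]
        exact Matrix.det_transvection_of_ne a0 b0 hab c
      · have : T.submatrix (emb I) (emb I) = 1 := by
          ext a b
          rw [submatrix_apply, hTapp]
          have : ¬(i = emb I a ∧ j = emb I b) := by
            rintro ⟨_, h2⟩; exact hjI (h2 ▸ emb_mem I b)
          rw [if_neg this, add_zero, Matrix.one_apply]
          exact if_congr (emb_injective I).eq_iff rfl rfl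
        rw [this, det_one]
    · have : T.submatrix (emb I) (emb I) = 1 := by
        ext a b
        rw [submatrix_apply, hTapp]
        have : ¬(i = emb I a ∧ j = emb I b) := by
          rintro ⟨h1, _⟩; exact hiI (h1 ▸ emb_mem I a)
        rw [if_neg this, add_zero, Matrix.one_apply]
        exact if_congr (emb_injective I).eq_iff rfl rfl
      rw [this, det_one]
  -- off-diagonal entries vanish unless i ∈ I \ J
  have key : ∀ I J, I ≠ J → (i ∉ I.1 ∨ i ∈ J.1) → compound n p T I J = 0 := by
    intro I J hIJ hh
    have hne : ∃ x ∈ I.1, x ∉ J.1 := by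
      by_contra hc2
      push_neg at hc2
      exact hIJ (Subtype.ext (Finset.eq_of_subset_of_card_le hc2 (by rw [I.2, J.2])))
    obtain ⟨x, hxI, hxJ⟩ := hne
    have hxi : x ≠ i := by
      rintro rfl
      rcases hh with h1 | h1
      · exact h1 hxI
      · exact hxJ h1
    obtain ⟨a, ha⟩ := exists_emb hxI
    rw [compound_apply]
    refine det_eq_zero_of_row_eq_zero a fun b => ?_
    rw [submatrix_apply, ha, hTapp]
    rw [if_neg (fun he : x = emb J b => hxJ (he ▸ emb_mem J b)),
      if_neg (fun he : i = x ∧ j = emb J b => hxi he.1.symm), add_zero]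
  set E := compound n p T - 1 with hE
  have hEapply : ∀ I J, E I J = compound n p T I J - (1 : Matrix _ _ ℝ) I J := fun I J => rfl
  have hEzero : ∀ I J, I = J ∨ (i ∈ I.1 ∧ i ∉ J.1) ∨ E I J = 0 := by
    intro I J
    by_cases h1 : I = J
    · exact Or.inl h1
    by_cases h2 : i ∈ I.1 ∧ i ∉ J.1
    · exact Or.inr (Or.inl h2)
    refine Or.inr (Or.inr ?_)
    rw [hEapply, Matrix.one_apply_ne h1, sub_zero]
    apply key I J h1
    by_contra h3
    push_neg at h3
    exact h2 ⟨h3.1, h3.2⟩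
  have hsq : E * E = 0 := by
    ext I J
    rw [mul_apply, Matrix.zero_apply]
    refine Finset.sum_eq_zero fun K _ => ?_
    rcases hEzero I K with h1 | h1 | h1
    · subst h1
      have : E I I = 0 := by rw [hEapply, hdiag, Matrix.one_apply_eq, sub_self]
      rw [this, zero_mul]
    · rcases hEzero K J with h2 | h2 | h2
      · subst h2
        have : E K K = 0 := by rw [hEapply, hdiag, Matrix.one_apply_eq, sub_self]
        rw [this, mul_zero]
      · exact absurd h2.1 h1.2
      · rw [h2, mul_zero]
    · rw [h1, zero_mul]
  have : compound n p T = 1 + E := by rw [hE]; abel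
  rw [this]
  exact det_one_add_of_sq E hsq

theorem count_mem (hp1 : 1 ≤ p) (i : Fin n) :
    (Finset.univ.filter
        (fun I : {s : Finset (Fin n) // s.card = p} => i ∈ I.1)).card
      = Nat.choose (n - 1) (p - 1) := by
  classical
  have hcard : ((Finset.univ.erase i).powersetCard (p - 1)).card = Nat.choose (n - 1) (p - 1) := by
    rw [Finset.card_powersetCard, Finset.card_erase_of_mem (Finset.mem_univ i),
      Finset.card_univ, Fintype.card_fin]
  rw [← hcard]
  refine Finset.card_bij' (fun I _ => I.1.erase i)
    (fun t ht => ⟨insert i t, ?_⟩) ?_ ?_ ?_ ?_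
  · rw [Finset.mem_powersetCard] at ht
    have hit : i ∉ t := fun hin => (Finset.notMem_erase i Finset.univ) (ht.1 hin)
    rw [Finset.card_insert_of_notMem hit, ht.2, Nat.sub_add_cancel hp1]
  · intro I hI
    rw [Finset.mem_filter] at hI
    rw [Finset.mem_powersetCard]
    exact ⟨Finset.erase_subset_erase i (Finset.subset_univ _),
      by rw [Finset.card_erase_of_mem hI.2, I.2]⟩
  · intro t ht
    exact Finset.mem_filter.mpr ⟨Finset.mem_univ _, Finset.mem_insert_self i t⟩
  · intro I hI
    rw [Finset.mem_filter] at hI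
    exact Subtype.ext (Finset.insert_erase hI.2)
  · intro t ht
    rw [Finset.mem_powersetCard] at ht
    have hit : i ∉ t := fun hin => (Finset.notMem_erase i Finset.univ) (ht.1 hin)
    exact Finset.erase_insert hit

theorem det_compound_diagonal (hp1 : 1 ≤ p) (d : Fin n → ℝ) :
    det (compound n p (Matrix.diagonal d))
      = (det (Matrix.diagonal d)) ^ Nat.choose (n - 1) (p - 1) := by
  classical
  rw [compound_diagonal, det_diagonal, det_diagonal]
  calc (∏ I : {s : Finset (Fin n) // s.card = p}, ∏ i ∈ I.1, d i)
      = ∏ I : {s : Finset (Fin n) // s.card = p}, ∏ i : Fin n,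
          (if i ∈ I.1 then d i else 1) := by
        refine Finset.prod_congr rfl fun I _ => ?_
        rw [Finset.prod_ite_mem, Finset.univ_inter]
    _ = ∏ i : Fin n, ∏ I : {s : Finset (Fin n) // s.card = p},
          (if i ∈ I.1 then d i else 1) := Finset.prod_comm
    _ = ∏ i : Fin n, d i ^ Nat.choose (n - 1) (p - 1) := by
        refine Finset.prod_congr rfl fun i _ => ?_
        rw [← Finset.prod_filter, Finset.prod_const, count_mem hp1 i]
    _ = (∏ i : Fin n, d i) ^ Nat.choose (n - 1) (p - 1) := by
        rw [Finset.prod_pow]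

end SFaux

/-- **Sylvester–Franke theorem.** The determinant of the `p`-th compound of
`A` is `(det A)^{C(n−1,p−1)}`; in particular `A` is invertible iff its `p`-th
compound is. -/
theorem stmt_16 (n p : ℕ) (hp1 : 1 ≤ p) (hpn : p ≤ n)
    (A : Matrix (Fin n) (Fin n) ℝ) :
    (compound n p A).det = A.det ^ Nat.choose (n - 1) (p - 1) ∧
    (IsUnit A ↔ IsUnit (compound n p A)) := by
  classical
  have hdet : (compound n p A).det = A.det ^ Nat.choose (n - 1) (p - 1) := by
    apply Matrix.diagonal_transvection_induction
      (fun M => (compound n p M).det = M.det ^ Nat.choose (n - 1) (p - 1)) A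
    · intro D _
      exact SFaux.det_compound_diagonal hp1 D
    · intro t
      rw [Matrix.TransvectionStruct.toMatrix_mk]
      rw [SFaux.compound_transvection t.i t.j t.hij t.c,
        Matrix.det_transvection_of_ne t.i t.j t.hij t.c, one_pow]
    · intro M N hM hN
      rw [SFaux.compound_mul, Matrix.det_mul, Matrix.det_mul, hM, hN, mul_pow]
  refine ⟨hdet, ?_⟩
  rw [Matrix.isUnit_iff_isUnit_det, Matrix.isUnit_iff_isUnit_det, hdet]
  have hc : Nat.choose (n - 1) (p - 1) ≠ 0 :=
    (Nat.choose_pos (Nat.sub_le_sub_right hpn 1)).ne'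
  simp only [isUnit_iff_ne_zero]
  exact (pow_ne_zero_iff hc).symm
end

section
/- Let V be an n-dimensional real vector space and let p be an integer with 1 < p < n−1. Let Λ^pV* denote the space of alternating p-linear maps Vᵖ → ℝ, and for X ∈ V and η ∈ Λ^pV* let ι_Xη ∈ Λ^{p−1}V* denote the interior product (ι_Xη)(v₁,…,v_{p−1}) := η(X, v₁,…,v_{p−1}). Equip E := V × Λ^pV* with the Λ^{p−1}V*-valued symmetric pairing ⟨(X,ξ),(Y,η)⟩ := ι_Xη + ι_Yξ. Suppose F : E → E is a linear map satisfying ⟨F(e), e'⟩ + ⟨e, F(e')⟩ = 0 for all e, e' ∈ E. Then there exist a unique scalar λ ∈ ℝ and a unique alternating (p+1)-linear map C ∈ Λ^{p+1}V* such that F(X, ξ) = (λ·X, −ι_X C − λ·ξ) for all (X,ξ) ∈ E. In particular, the V-to-V block of F is a multiple of the identity, the Λ^pV*-to-V block vanishes, and the Λ^pV*-to-Λ^pV* block is −λ times the identity. -/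
open Module Function

namespace Stmt19Aux

variable {V : Type*} [AddCommGroup V] [Module ℝ V] {n q : ℕ}

/-- The basic `p`-form `ε_s` given by the determinant of selected coordinates. -/
noncomputable def eps (b : Basis (Fin n) ℝ V) (s : Fin (q+1) → Fin n) :
    AlternatingMap ℝ V ℝ (Fin (q+1)) :=
  (Matrix.detRowAlternating : (Fin (q+1) → ℝ) [⋀^Fin (q+1)]→ₗ[ℝ] ℝ).compLinearMap
    (LinearMap.pi fun j => b.coord (s j))

lemma eps_apply (b : Basis (Fin n) ℝ V) (s : Fin (q+1) → Fin n) (v : Fin (q+1) → V) :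
    eps b s v = Matrix.det (Matrix.of fun i j => b.repr (v i) (s j)) := rfl

lemma eps_row_zero (b : Basis (Fin n) ℝ V) (s : Fin (q+1) → Fin n) (v : Fin (q+1) → V)
    (i₀ : Fin (q+1)) (h : ∀ j, b.repr (v i₀) (s j) = 0) : eps b s v = 0 := by
  rw [eps_apply]
  exact Matrix.det_eq_zero_of_row_eq_zero i₀ h

lemma eps_diag (b : Basis (Fin n) ℝ V) {s : Fin (q+1) → Fin n} (hs : Injective s) :
    eps b s (fun i => b (s i)) = 1 := by
  rw [eps_apply]
  have h1 : (Matrix.of fun i j => b.repr (b (s i)) (s j))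
      = (1 : Matrix (Fin (q+1)) (Fin (q+1)) ℝ) := by
    ext i j
    rw [Matrix.of_apply, b.repr_self, Finsupp.single_apply, Matrix.one_apply]
    by_cases h : i = j
    · simp [h]
    · rw [if_neg (fun hh => h (hs hh)), if_neg h]
  rw [h1, Matrix.det_one]

/-- Expansion of an alternating map in its first argument along a basis. -/
lemma cons_expand (b : Basis (Fin n) ℝ V) (f : AlternatingMap ℝ V ℝ (Fin (q+1)))
    (w : V) (r : Fin q → V) :
    f (Fin.cons w r) = ∑ j, b.repr w j • f (Fin.cons (b j) r) := by
  have h0 : Fin.cons w r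
      = Function.update (Fin.cons w r : Fin (q+1) → V) 0 ((∑ j, b.repr w j • b j : V)) := by
    rw [b.sum_repr]
    exact (Function.update_eq_self (0 : Fin (q+1)) (Fin.cons w r : Fin (q+1) → V)).symm
  rw [h0, AlternatingMap.map_update_sum]
  refine Finset.sum_congr rfl fun j _ => ?_
  have h2 : f (Function.update (Fin.cons w r : Fin (q+1) → V) 0 (b.repr w j • b j))
      = b.repr w j • f (Function.update (Fin.cons w r : Fin (q+1) → V) 0 (b j)) :=
    f.toMultilinearMap.map_update_smul _ _ _ _
  rw [h2, Fin.update_cons_zero]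

lemma eps_cons_basis (b : Basis (Fin n) ℝ V) {s : Fin (q+1) → Fin n} (hs : Injective s)
    (w : V) :
    eps b s (Fin.cons w (fun i => b (s i.succ))) = b.repr w (s 0) := by
  rw [cons_expand b]
  rw [Finset.sum_eq_single (s 0)]
  · have h1 : (Fin.cons (b (s 0)) (fun i => b (s i.succ)) : Fin (q+1) → V)
        = fun i => b (s i) := by
      funext i
      refine Fin.cases ?_ (fun i' => ?_) i
      · simp
      · simp
    rw [h1, eps_diag b hs, smul_eq_mul, mul_one]
  · intro j _ hj
    by_cases hex : ∃ i, s i = j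
    · obtain ⟨i, hi⟩ := hex
      have hi0 : i ≠ 0 := by rintro rfl; exact hj hi.symm
      obtain ⟨i', rfl⟩ := Fin.exists_succ_eq.mpr hi0
      have heq : (Fin.cons (b j) (fun i => b (s i.succ)) : Fin (q+1) → V) 0
          = (Fin.cons (b j) (fun i => b (s i.succ)) : Fin (q+1) → V) i'.succ := by
        simp [hi]
      rw [AlternatingMap.map_eq_zero_of_eq _ _ heq (Fin.succ_ne_zero i').symm, smul_zero]
    · rw [eps_row_zero b s _ 0 ?_, smul_zero]
      intro j'
      rw [Fin.cons_zero, b.repr_self, Finsupp.single_apply]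
      rw [if_neg (fun hh : j = s j' => hex ⟨j', hh.symm⟩)]
  · intro h
    exact absurd (Finset.mem_univ _) h

lemma eps_perm (b : Basis (Fin n) ℝ V) (s : Fin (q+1) → Fin n) (σ : Equiv.Perm (Fin (q+1)))
    (v : Fin (q+1) → V) :
    eps b (s ∘ σ) v = ((Equiv.Perm.sign σ : ℤ) : ℝ) * eps b s v := by
  rw [eps_apply, eps_apply]
  have h1 : (Matrix.of fun i j => b.repr (v i) ((s ∘ σ) j))
      = (Matrix.of fun i j => b.repr (v i) (s j)).submatrix id σ := rfl
  rw [h1, Matrix.det_permute']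

lemma val_one_q [NeZero q] : ((1 : Fin (q+1)) : ℕ) = 1 := by
  have hq1 : 1 ≤ q := Nat.one_le_iff_ne_zero.mpr (NeZero.ne q)
  rw [Fin.val_one', Nat.mod_eq_of_lt (by omega)]

lemma succ_ne_one' [NeZero q] {i : Fin q} (hi : i ≠ 0) : (i.succ : Fin (q+1)) ≠ 1 := by
  intro h
  apply hi
  have hv := congrArg Fin.val h
  rw [Fin.val_succ, val_one_q] at hv
  have hiv : i.val = 0 := by omega
  exact Fin.ext (by simp [hiv])

lemma zero_ne_one' [NeZero q] : (0 : Fin (q+1)) ≠ 1 := by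
  have h1 : (1 : Fin (q+1)).val = 1 := val_one_q
  intro h
  have := congrArg Fin.val h
  rw [h1] at this
  simp at this

lemma eps_cons_basis_swap [NeZero q] (b : Basis (Fin n) ℝ V) {s : Fin (q+1) → Fin n}
    (hs : Injective s) (w : V) :
    eps b s (Fin.cons w (Function.update (fun i : Fin q => b (s i.succ)) 0 (b (s 0)))) =
      -(b.repr w (s 1)) := by
  have h01 := zero_ne_one' (q := q)
  set σ : Equiv.Perm (Fin (q+1)) := Equiv.swap 0 1 with hσ
  have hs' : Injective (s ∘ σ) := hs.comp σ.injective
  have key := eps_cons_basis b hs' w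
  have harg : (fun i : Fin q => b ((s ∘ σ) i.succ))
      = Function.update (fun i : Fin q => b (s i.succ)) 0 (b (s 0)) := by
    funext i
    rcases eq_or_ne i 0 with rfl | hi
    · have h1 : σ (Fin.succ 0) = 0 := by
        rw [Fin.succ_zero_eq_one', hσ]; exact Equiv.swap_apply_right 0 1
      show b ((s ∘ σ) (Fin.succ 0))
          = Function.update (fun i : Fin q => b (s i.succ)) 0 (b (s 0)) 0
      rw [Function.update_self, Function.comp_apply, h1]
    · have h1 : (i.succ : Fin (q+1)) ≠ 0 := Fin.succ_ne_zero i
      have h2 : (i.succ : Fin (q+1)) ≠ 1 := succ_ne_one' hi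
      have h3 : σ i.succ = i.succ := by rw [hσ]; exact Equiv.swap_apply_of_ne_of_ne h1 h2
      show b ((s ∘ σ) i.succ)
          = Function.update (fun i : Fin q => b (s i.succ)) 0 (b (s 0)) i
      rw [Function.update_of_ne hi, Function.comp_apply, h3]
  rw [harg] at key
  have hperm := eps_perm b s σ
    (Fin.cons w (Function.update (fun i : Fin q => b (s i.succ)) 0 (b (s 0))))
  have hsign : ((Equiv.Perm.sign σ : ℤ) : ℝ) = -1 := by
    rw [hσ, Equiv.Perm.sign_swap h01]; norm_num
  rw [hsign] at hperm
  have hσ0 : (s ∘ σ) 0 = s 1 := by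
    simp [hσ, Equiv.swap_apply_left]
  rw [hperm, hσ0] at key
  linarith

lemma exists_s (hq1 : 1 ≤ q) (hpn : q + 1 ≤ n) {k m : Fin n} (hkm : k ≠ m) :
    ∃ s : Fin (q+1) → Fin n, Injective s ∧ s 0 = k ∧ s 1 = m := by
  haveI : NeZero q := ⟨by omega⟩
  have hn0 : 0 < n := k.pos
  haveI : NeZero n := ⟨hn0.ne'⟩
  have hn2 : 2 ≤ n := by
    rcases Nat.lt_or_ge n 2 with h | h
    · exact absurd (Fin.ext_iff.mpr (show k.val = m.val by omega)) hkm
    · exact h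
  have hv1 : (1 : Fin n).val = 1 := by rw [Fin.val_one', Nat.mod_eq_of_lt (by omega)]
  have h01n : (0 : Fin n) ≠ 1 := by
    intro h
    have := congrArg Fin.val h
    rw [hv1] at this
    simp at this
  set σ₁ := Equiv.swap (0 : Fin n) k with hσ₁
  set m₁ := σ₁.symm m with hm₁
  have hm₁0 : m₁ ≠ 0 := by
    rw [hm₁]
    intro h
    have : m = σ₁ 0 := by rw [← h]; simp
    rw [hσ₁, Equiv.swap_apply_left] at this
    exact hkm this.symm
  set σ := σ₁ * Equiv.swap (1 : Fin n) m₁ with hσ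
  have hσ0 : σ 0 = k := by
    rw [hσ, Equiv.Perm.mul_apply, Equiv.swap_apply_of_ne_of_ne h01n (Ne.symm hm₁0), hσ₁,
      Equiv.swap_apply_left]
  have hσ1 : σ 1 = m := by
    rw [hσ, Equiv.Perm.mul_apply, Equiv.swap_apply_left, hm₁]
    simp
  refine ⟨fun i => σ (Fin.castLE hpn i), ?_, ?_, ?_⟩
  · exact σ.injective.comp (Fin.castLE_injective hpn)
  · have e0 : Fin.castLE hpn (0 : Fin (q+1)) = (0 : Fin n) := by
      ext; simp
    show σ (Fin.castLE hpn 0) = k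
    rw [e0, hσ0]
  · have e1 : Fin.castLE hpn (1 : Fin (q+1)) = (1 : Fin n) := by
      ext
      rw [Fin.coe_castLE, hv1]
      exact val_one_q
    show σ (Fin.castLE hpn 1) = m
    rw [e1, hσ1]

lemma curry_ext {m : ℕ} {f g : AlternatingMap ℝ V ℝ (Fin (m+1))}
    (h : ∀ x, f.curryLeft x = g.curryLeft x) : f = g := by
  apply AlternatingMap.ext
  intro v
  have h2 := congrArg (fun (F' : AlternatingMap ℝ V ℝ (Fin m)) => F' (Fin.tail v)) (h (v 0))
  simpa [AlternatingMap.curryLeft_apply_apply, Matrix.vecCons, Fin.cons_self_tail] using h2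

end Stmt19Aux

open Stmt19Aux

set_option maxHeartbeats 1000000 in
/-- **The `orthogonal` Lie algebra of the higher generalized tangent space.** -/
theorem stmt_19 (n q : ℕ) (hq : 1 < q + 1) (hn : q + 1 < n - 1)
    {V : Type*} [AddCommGroup V] [Module ℝ V] [FiniteDimensional ℝ V]
    (hdim : Module.finrank ℝ V = n)
    (F : (V × AlternatingMap ℝ V ℝ (Fin (q + 1))) →ₗ[ℝ]
          (V × AlternatingMap ℝ V ℝ (Fin (q + 1))))
    (hF : ∀ e e' : V × AlternatingMap ℝ V ℝ (Fin (q + 1)),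
      ((e'.2.curryLeft ((F e).1) + ((F e).2).curryLeft e'.1) +
        (((F e').2).curryLeft e.1 + e.2.curryLeft ((F e').1))
          : AlternatingMap ℝ V ℝ (Fin q)) = 0) :
    ∃! lc : ℝ × AlternatingMap ℝ V ℝ (Fin (q + 2)),
      ∀ (X : V) (ξ : AlternatingMap ℝ V ℝ (Fin (q + 1))),
        F (X, ξ) = (lc.1 • X, -(lc.2.curryLeft X) - lc.1 • ξ) := by
  classical
  have hq1 : 1 ≤ q := by omega
  haveI : NeZero q := ⟨by omega⟩
  have hn3 : q + 3 ≤ n := by omega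
  have hpn : q + 1 ≤ n := by omega
  let b : Basis (Fin n) ℝ V := finBasisOfFinrankEq ℝ V hdim
  set A : V →ₗ[ℝ] V :=
    LinearMap.fst ℝ _ _ ∘ₗ F ∘ₗ LinearMap.inl ℝ _ _ with hAdef
  set Bm : V →ₗ[ℝ] AlternatingMap ℝ V ℝ (Fin (q+1)) :=
    LinearMap.snd ℝ _ _ ∘ₗ F ∘ₗ LinearMap.inl ℝ _ _ with hBdef
  set P : AlternatingMap ℝ V ℝ (Fin (q+1)) →ₗ[ℝ] V :=
    LinearMap.fst ℝ _ _ ∘ₗ F ∘ₗ LinearMap.inr ℝ _ _ with hPdef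
  set D : AlternatingMap ℝ V ℝ (Fin (q+1)) →ₗ[ℝ] AlternatingMap ℝ V ℝ (Fin (q+1)) :=
    LinearMap.snd ℝ _ _ ∘ₗ F ∘ₗ LinearMap.inr ℝ _ _ with hDdef
  have hFc : ∀ (X : V) (ξ : AlternatingMap ℝ V ℝ (Fin (q+1))),
      F (X, ξ) = (A X + P ξ, Bm X + D ξ) := by
    intro X ξ
    have h1 : ((X, ξ) : V × AlternatingMap ℝ V ℝ (Fin (q+1))) = (X, 0) + (0, ξ) := by simp
    rw [h1, map_add]
    rfl
  -- the three relations
  have R1 : ∀ X Y : V, (Bm X).curryLeft Y + (Bm Y).curryLeft X = 0 := by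
    intro X Y
    have h := hF (X, 0) (Y, 0)
    simpa [hFc] using h
  have R2 : ∀ (X : V) (η : AlternatingMap ℝ V ℝ (Fin (q+1))),
      η.curryLeft (A X) + (D η).curryLeft X = 0 := by
    intro X η
    have h := hF (X, 0) (0, η)
    simpa [hFc] using h
  have R3 : ∀ ξ η : AlternatingMap ℝ V ℝ (Fin (q+1)),
      η.curryLeft (P ξ) + ξ.curryLeft (P η) = 0 := by
    intro ξ η
    have h := hF (0, ξ) (0, η)
    simpa [hFc] using h
  -- ### Step Π = 0
  have hPeps : ∀ s : Fin (q+1) → Fin n, Injective s → P (eps b s) = 0 := by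
    intro s hs
    apply b.ext_elem
    intro k
    rw [map_zero, Finsupp.zero_apply]
    have hcompl : ((insert k (Finset.image s Finset.univ))ᶜ : Finset (Fin n)).Nonempty := by
      rw [← Finset.card_pos, Finset.card_compl]
      have h1 : (insert k (Finset.image s Finset.univ)).card ≤ q + 2 := by
        calc (insert k (Finset.image s Finset.univ)).card
            ≤ (Finset.image s Finset.univ).card + 1 := Finset.card_insert_le _ _
          _ ≤ (Finset.univ : Finset (Fin (q+1))).card + 1 := by
              exact Nat.add_le_add_right (Finset.card_image_le) 1
          _ = q + 2 := by simp
      have h2 : Fintype.card (Fin n) = n := by simp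
      omega
    obtain ⟨m, hm⟩ := hcompl
    rw [Finset.mem_compl, Finset.mem_insert, not_or] at hm
    obtain ⟨hmk, hms⟩ := hm
    have hms' : ∀ i, s i ≠ m := by
      intro i h
      exact hms (Finset.mem_image.mpr ⟨i, Finset.mem_univ i, h⟩)
    have hkm : k ≠ m := fun h => hmk h.symm
    obtain ⟨t, ht, ht0, ht1⟩ := exists_s hq1 hpn hkm
    set r : Fin q → V := fun i => b (t i.succ) with hr
    have h4 := congrArg (fun g : AlternatingMap ℝ V ℝ (Fin q) => g r) (R3 (eps b s) (eps b t))
    simp only [AlternatingMap.add_apply, AlternatingMap.zero_apply,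
      AlternatingMap.curryLeft_apply_apply, Matrix.vecCons] at h4
    have h5 : eps b s (Fin.cons (P (eps b t)) r) = 0 := by
      apply eps_row_zero b s _ 1
      intro j
      have h1 : (Fin.cons (P (eps b t)) r : Fin (q+1) → V) 1 = b m := by
        rw [← Fin.succ_zero_eq_one', Fin.cons_succ, hr]
        show b (t (Fin.succ 0)) = b m
        rw [Fin.succ_zero_eq_one', ht1]
      rw [h1, b.repr_self, Finsupp.single_apply]
      rw [if_neg (fun hh : m = s j => (hms' j) hh.symm)]
    rw [h5, add_zero, eps_cons_basis b ht, ht0] at h4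
    exact h4
  have hP : ∀ η : AlternatingMap ℝ V ℝ (Fin (q+1)), P η = 0 := by
    intro η
    apply b.ext_elem
    intro k
    rw [map_zero, Finsupp.zero_apply]
    obtain ⟨m, hmk⟩ := Fintype.exists_ne_of_one_lt_card (by simp; omega) k
    obtain ⟨s, hs, hs0, _⟩ := exists_s hq1 hpn (Ne.symm hmk)
    have h3 := R3 η (eps b s)
    rw [hPeps s hs, map_zero, add_zero] at h3
    have h4 := congrArg
      (fun g : AlternatingMap ℝ V ℝ (Fin q) => g (fun i => b (s i.succ))) h3
    simp only [AlternatingMap.zero_apply, AlternatingMap.curryLeft_apply_apply,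
      Matrix.vecCons] at h4
    rw [eps_cons_basis b hs, hs0] at h4
    exact h4
  -- ### Step A = λ id
  have hAoff : ∀ s : Fin (q+1) → Fin n, Injective s → b.repr (A (b (s 1))) (s 0) = 0 := by
    intro s hs
    have h4 := congrArg
      (fun g : AlternatingMap ℝ V ℝ (Fin q) => g (fun i => b (s i.succ)))
      (R2 (b (s 1)) (eps b s))
    simp only [AlternatingMap.add_apply, AlternatingMap.zero_apply,
      AlternatingMap.curryLeft_apply_apply, Matrix.vecCons] at h4
    have hz : (D (eps b s)) (Fin.cons (b (s 1)) (fun i => b (s i.succ))) = 0 := by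
      apply AlternatingMap.map_eq_zero_of_eq _ _
        (?_ : _ = (Fin.cons (b (s 1)) (fun i => b (s i.succ)) : Fin (q+1) → V) (Fin.succ 0))
        (Fin.succ_ne_zero 0).symm
      rw [Fin.cons_zero, Fin.cons_succ, Fin.succ_zero_eq_one']
    rw [hz, add_zero, eps_cons_basis b hs] at h4
    exact h4
  have hAdiag : ∀ s : Fin (q+1) → Fin n, Injective s →
      b.repr (A (b (s 0))) (s 0) = b.repr (A (b (s 1))) (s 1) := by
    intro s hs
    have h01 := zero_ne_one' (q := q)
    set r : Fin q → V := fun i => b (s i.succ) with hr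
    set u : Fin q → V := Function.update r 0 (b (s 0)) with hu
    have h1 := congrArg
      (fun g : AlternatingMap ℝ V ℝ (Fin q) => g r) (R2 (b (s 0)) (eps b s))
    simp only [AlternatingMap.add_apply, AlternatingMap.zero_apply,
      AlternatingMap.curryLeft_apply_apply, Matrix.vecCons] at h1
    rw [eps_cons_basis b hs] at h1
    have h2 := congrArg
      (fun g : AlternatingMap ℝ V ℝ (Fin q) => g u) (R2 (b (s 1)) (eps b s))
    simp only [AlternatingMap.add_apply, AlternatingMap.zero_apply,
      AlternatingMap.curryLeft_apply_apply, Matrix.vecCons] at h2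
    have hswap : (Fin.cons (b (s 1)) u : Fin (q+1) → V)
        = (Fin.cons (b (s 0)) r : Fin (q+1) → V) ∘ (Equiv.swap (0 : Fin (q+1)) 1) := by
      funext i
      refine Fin.cases ?_ (fun i' => ?_) i
      · rw [Function.comp_apply, Equiv.swap_apply_left, Fin.cons_zero,
          ← Fin.succ_zero_eq_one', Fin.cons_succ, hr]
      · rcases eq_or_ne i' 0 with rfl | hi'
        · rw [Function.comp_apply, Fin.cons_succ, Fin.succ_zero_eq_one',
            Equiv.swap_apply_right, Fin.cons_zero, hu]
          rw [Function.update_self]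
        · have hne1 : (Fin.succ i' : Fin (q+1)) ≠ 1 := succ_ne_one' hi'
          rw [Function.comp_apply, Equiv.swap_apply_of_ne_of_ne (Fin.succ_ne_zero i') hne1,
            Fin.cons_succ, Fin.cons_succ, hu, Function.update_of_ne hi']
    have hDswap : (D (eps b s)) (Fin.cons (b (s 1)) u)
        = -(D (eps b s)) (Fin.cons (b (s 0)) r) := by
      rw [hswap]
      exact AlternatingMap.map_swap _ _ h01
    have hes : eps b s (Fin.cons (A (b (s 1))) u) = -(b.repr (A (b (s 1))) (s 1)) := by
      have h3 := eps_cons_basis_swap b hs (A (b (s 1)))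
      rw [← hr, ← hu] at h3
      exact h3
    rw [hes, hDswap] at h2
    linarith
  set i0 : Fin n := ⟨0, by omega⟩ with hi0def
  set lam : ℝ := b.repr (A (b i0)) i0 with hlam
  have hAbasis : ∀ k, A (b k) = lam • b k := by
    intro k
    apply b.ext_elem
    intro j
    rw [map_smul, Finsupp.smul_apply, b.repr_self, Finsupp.single_apply]
    rcases eq_or_ne j k with rfl | hjk
    · rw [if_pos rfl, smul_eq_mul, mul_one]
      rcases eq_or_ne j i0 with rfl | hji
      · rw [hlam]
      · obtain ⟨s, hs, hs0, hs1⟩ := exists_s hq1 hpn (Ne.symm hji)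
        have h3 := hAdiag s hs
        rw [hs0, hs1] at h3
        rw [hlam, h3]
    · obtain ⟨s, hs, hs0, hs1⟩ := exists_s hq1 hpn hjk
      have h3 := hAoff s hs
      rw [hs0, hs1] at h3
      rw [h3, if_neg (Ne.symm hjk), smul_zero]
  have hAapp : ∀ X : V, A X = lam • X := by
    intro X
    conv_lhs => rw [← b.sum_repr X]
    rw [map_sum]
    have h3 : ∀ k ∈ Finset.univ, A (b.repr X k • b k) = lam • (b.repr X k • b k) := by
      intro k _
      rw [map_smul, hAbasis k, smul_comm]
    rw [Finset.sum_congr rfl h3, ← Finset.smul_sum, b.sum_repr]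
  -- ### Step D = -λ id
  have hD : ∀ η : AlternatingMap ℝ V ℝ (Fin (q+1)), D η = -(lam • η) := by
    intro η
    apply curry_ext
    intro x
    have h2 := R2 x η
    rw [hAapp x, map_smul] at h2
    have h3 : (-(lam • η)).curryLeft x = -(lam • η.curryLeft x) := by
      rw [show -(lam • η) = (-lam) • η from (neg_smul lam η).symm, AlternatingMap.curryLeft_smul]
      simp [neg_smul]
    rw [h3]
    rw [add_comm] at h2
    exact eq_neg_of_add_eq_zero_left h2
  -- ### Step: construction of C
  let BM : V →ₗ[ℝ] MultilinearMap ℝ (fun _ : Fin (q+1) => V) ℝ :=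
    { toFun := fun X => (Bm X).toMultilinearMap
      map_add' := fun x y => MultilinearMap.ext fun v => by
        show Bm (x + y) v = Bm x v + Bm y v
        rw [map_add]; rfl
      map_smul' := fun c x => MultilinearMap.ext fun v => by
        show Bm (c • x) v = c • Bm x v
        rw [map_smul]; rfl }
  have hZ : ∀ (x : V) (u : Fin (q+1) → V), (∃ k, u k = x) → Bm x u = 0 := by
    have hx : ∀ (x : V) (w : Fin q → V), Bm x (Fin.cons x w) = 0 := by
      intro x w
      have h1 := R1 x x
      have h2 : (Bm x).curryLeft x = 0 := by
        have h3 : (2 : ℝ) • (Bm x).curryLeft x = 0 := by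
          rw [two_smul]; exact h1
        rcases smul_eq_zero.mp h3 with h | h
        · norm_num at h
        · exact h
      have h4 := congrArg (fun g : AlternatingMap ℝ V ℝ (Fin q) => g w) h2
      simpa [AlternatingMap.curryLeft_apply_apply, Matrix.vecCons] using h4
    intro x u hk
    obtain ⟨k, hk⟩ := hk
    rcases eq_or_ne k 0 with rfl | hk0
    · have hu : u = Fin.cons x (Fin.tail u) := by
        rw [← hk]
        exact (Fin.cons_self_tail u).symm
      rw [hu]
      exact hx x _
    · have hsw := AlternatingMap.map_swap (Bm x) u (Ne.symm hk0 : (0 : Fin (q+1)) ≠ k)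
      have hv0 : (u ∘ (Equiv.swap (0 : Fin (q+1)) k)) 0 = x := by
        simp [Equiv.swap_apply_left, hk]
      have h0 : Bm x (u ∘ (Equiv.swap (0 : Fin (q+1)) k)) = 0 := by
        have hc : u ∘ (Equiv.swap (0 : Fin (q+1)) k)
            = Fin.cons x (Fin.tail (u ∘ (Equiv.swap (0 : Fin (q+1)) k))) := by
          rw [← hv0]
          exact (Fin.cons_self_tail _).symm
        rw [hc]
        exact hx x _
      rw [h0] at hsw
      linarith
  let C : AlternatingMap ℝ V ℝ (Fin (q+2)) :=
    { toMultilinearMap := -(LinearMap.uncurryLeft BM)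
      map_eq_zero_of_eq' := by
        intro v i j hv hij
        show -(Bm (v 0) (Fin.tail v)) = 0
        rw [neg_eq_zero]
        rcases eq_or_ne i 0 with rfl | hi0
        · have hj0 : j ≠ 0 := Ne.symm hij
          obtain ⟨j', rfl⟩ := Fin.exists_succ_eq.mpr hj0
          refine hZ (v 0) _ ⟨j', ?_⟩
          show v j'.succ = v 0
          rw [← hv]
        · rcases eq_or_ne j 0 with rfl | hj0
          · obtain ⟨i', rfl⟩ := Fin.exists_succ_eq.mpr hi0
            refine hZ (v 0) _ ⟨i', ?_⟩
            exact hv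
          · obtain ⟨i', rfl⟩ := Fin.exists_succ_eq.mpr hi0
            obtain ⟨j', rfl⟩ := Fin.exists_succ_eq.mpr hj0
            refine (Bm (v 0)).map_eq_zero_of_eq _ (hv : Fin.tail v i' = Fin.tail v j') ?_
            intro h
            exact hij (by rw [h]) }
  have hCapp : ∀ v : Fin (q+2) → V, C v = -(Bm (v 0) (Fin.tail v)) := fun v => rfl
  have hBC : ∀ X : V, Bm X = -(C.curryLeft X) := by
    intro X
    apply AlternatingMap.ext
    intro w
    rw [AlternatingMap.neg_apply, AlternatingMap.curryLeft_apply_apply, hCapp, neg_neg]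
    have h1 : Fin.tail (Matrix.vecCons X w) = w := Fin.tail_cons (α := fun _ : Fin (q+2) => V) X w
    rw [h1, Matrix.cons_val_zero]
  -- ### existence and uniqueness
  have hexist : ∀ (X : V) (ξ : AlternatingMap ℝ V ℝ (Fin (q+1))),
      F (X, ξ) = (lam • X, -(C.curryLeft X) - lam • ξ) := by
    intro X ξ
    rw [hFc X ξ, hAapp X, hP ξ, hD ξ, hBC X]
    rw [Prod.ext_iff]
    constructor
    · simp
    · simp [sub_eq_add_neg]
  refine ⟨(lam, C), hexist, ?_⟩
  rintro ⟨mu, C'⟩ h'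
  have hmu : mu = lam := by
    have h1 := congrArg Prod.fst (h' (b i0) 0)
    have h2 := congrArg Prod.fst (hexist (b i0) 0)
    simp only at h1 h2
    have h3 : mu • b i0 = lam • b i0 := by rw [← h1, h2]
    have h4 : (mu - lam) • b i0 = 0 := by rw [sub_smul, h3, sub_self]
    rcases smul_eq_zero.mp h4 with h | h
    · linarith [sub_eq_zero.mp h]
    · exact absurd h (b.ne_zero i0)
  have hC : C' = C := by
    apply curry_ext
    intro x
    have h1 := congrArg Prod.snd (h' x 0)
    have h2 := congrArg Prod.snd (hexist x 0)
    simp only at h1 h2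
    have h3 : -(C'.curryLeft x) - mu • (0 : AlternatingMap ℝ V ℝ (Fin (q+1)))
        = -(C.curryLeft x) - lam • (0 : AlternatingMap ℝ V ℝ (Fin (q+1))) := by
      rw [← h1, h2]
    simp only [smul_zero, sub_zero, neg_inj] at h3
    exact h3
  rw [Prod.mk.injEq]
  exact ⟨hmu, hC⟩
end
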